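/- arXiv:1409.0031 — 9 statements merged into one kernel-verified Lean document; each statement's English description precedes it below -/
import Mathlib

section
/- For every real α with 0 < α < 1 and every real δ > 0, the expression (α^δ − α^{2δ} + δ·α^δ·log α)/(1 − α^δ)², which is the derivative with respect to δ of the function g(δ) = δ·α^δ/(1 − α^δ), satisfies −1/2 ≤ (α^δ − α^{2δ} + δ·α^δ·log α)/(1 − α^δ)² ≤ 0. In particular, g is nonincreasing on (0, ∞). -/
open Real

/-- `log x ≥ (x² - 1)/(2x)` for `0 < x ≤ 1`, via `sinh t ≥ t`. -/
lemma log_ge_aux {x : ℝ} (hx : 0 < x) (hx1 : x < 1) :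
    (x ^ 2 - 1) / (2 * x) ≤ Real.log x := by
  set t : ℝ := -Real.log x with ht
  have hxt : x = Real.exp (-t) := by rw [ht, neg_neg, Real.exp_log hx]
  have htpos : 0 < t := by
    have : Real.log x < 0 := Real.log_neg hx hx1
    linarith
  have hsinh : t ≤ Real.sinh t := Real.self_le_sinh_iff.2 htpos.le
  rw [Real.sinh_eq] at hsinh
  have hexp : (x ^ 2 - 1) / (2 * x) = (Real.exp (-t) - Real.exp t) / 2 := by
    rw [hxt]
    rw [div_eq_div_iff (by positivity) (by norm_num)]
    have : Real.exp t * Real.exp (-t) = 1 := by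
      rw [← Real.exp_add]; simp
    nlinarith [this]
  rw [hexp]
  have : Real.log x = -t := by rw [ht]; ring
  rw [this]
  linarith

/-- Main inequality for `x ∈ (0,1)`. -/
lemma main_ineq {x : ℝ} (hx : 0 < x) (hx1 : x < 1) :
    -(1 / 2) ≤ (x - x ^ 2 + x * Real.log x) / (1 - x) ^ 2 ∧
    (x - x ^ 2 + x * Real.log x) / (1 - x) ^ 2 ≤ 0 := by
  have h1x : (0:ℝ) < 1 - x := by linarith
  have hden : (0:ℝ) < (1 - x) ^ 2 := by positivity
  constructor
  · rw [le_div_iff₀ hden]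
    have h := log_ge_aux hx hx1
    have h2 : (x ^ 2 - 1) / 2 ≤ x * Real.log x := by
      calc (x ^ 2 - 1) / 2 = x * ((x ^ 2 - 1) / (2 * x)) := by field_simp
        _ ≤ x * Real.log x := mul_le_mul_of_nonneg_left h hx.le
    nlinarith
  · rw [div_nonpos_iff]
    right
    refine ⟨?_, hden.le⟩
    have h := Real.log_le_sub_one_of_pos hx
    nlinarith

/-- For `0 < α < 1` and `δ > 0`, the expression
`(α^δ - α^(2δ) + δ·α^δ·log α)/(1 - α^δ)²` is the derivative at `δ` of
`g(δ) = δ·α^δ/(1 - α^δ)`, lies in `[-1/2, 0]`, and `g` is nonincreasing on `(0, ∞)`. -/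
theorem stmt_3 (α δ : ℝ) (hα0 : 0 < α) (hα1 : α < 1) (hδ : 0 < δ) :
    HasDerivAt (fun s : ℝ => s * α ^ s / (1 - α ^ s))
      ((α ^ δ - α ^ (2 * δ) + δ * α ^ δ * Real.log α) / (1 - α ^ δ) ^ 2) δ ∧
    (-(1 / 2) ≤ (α ^ δ - α ^ (2 * δ) + δ * α ^ δ * Real.log α) / (1 - α ^ δ) ^ 2 ∧
      (α ^ δ - α ^ (2 * δ) + δ * α ^ δ * Real.log α) / (1 - α ^ δ) ^ 2 ≤ 0) ∧
    AntitoneOn (fun s : ℝ => s * α ^ s / (1 - α ^ s)) (Set.Ioi 0) := by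
  -- general derivative fact
  have hderiv : ∀ s : ℝ, 0 < s → HasDerivAt (fun s : ℝ => s * α ^ s / (1 - α ^ s))
      ((α ^ s - α ^ (2 * s) + s * α ^ s * Real.log α) / (1 - α ^ s) ^ 2) s := by
    intro s hs
    have hxs : α ^ s < 1 := Real.rpow_lt_one hα0.le hα1 hs
    have hxs0 : 0 < α ^ s := Real.rpow_pos_of_pos hα0 s
    have hpow : HasDerivAt (fun t : ℝ => α ^ t) (α ^ s * Real.log α) s :=
      (Real.hasStrictDerivAt_const_rpow hα0 s).hasDerivAt
    have hnum : HasDerivAt (fun t : ℝ => t * α ^ t)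
        (1 * α ^ s + s * (α ^ s * Real.log α)) s :=
      (hasDerivAt_id s).mul hpow
    have hden : HasDerivAt (fun t : ℝ => 1 - α ^ t) (-(α ^ s * Real.log α)) s := by
      simpa using hpow.const_sub (1:ℝ)
    have h := hnum.div hden (by linarith)
    refine h.congr_deriv ?_
    have h2s : α ^ (2 * s) = α ^ s * α ^ s := by
      rw [two_mul, Real.rpow_add hα0]
    rw [h2s]
    field_simp
    ring
  have hineq : ∀ s : ℝ, 0 < s →
      -(1 / 2) ≤ (α ^ s - α ^ (2 * s) + s * α ^ s * Real.log α) / (1 - α ^ s) ^ 2 ∧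
      (α ^ s - α ^ (2 * s) + s * α ^ s * Real.log α) / (1 - α ^ s) ^ 2 ≤ 0 := by
    intro s hs
    have hxs : α ^ s < 1 := Real.rpow_lt_one hα0.le hα1 hs
    have hxs0 : 0 < α ^ s := Real.rpow_pos_of_pos hα0 s
    have hlog : Real.log (α ^ s) = s * Real.log α := Real.log_rpow hα0 s
    have h2s : α ^ (2 * s) = (α ^ s) ^ 2 := by
      rw [two_mul, Real.rpow_add hα0]; ring
    have := main_ineq hxs0 hxs
    rw [hlog] at this
    rw [h2s]
    convert this using 4 <;> ring
  refine ⟨hderiv δ hδ, hineq δ hδ, ?_⟩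
  have hdiff : DifferentiableOn ℝ (fun s : ℝ => s * α ^ s / (1 - α ^ s)) (Set.Ioi 0) :=
    fun s hs => ((hderiv s hs).differentiableAt).differentiableWithinAt
  apply antitoneOn_of_deriv_nonpos (convex_Ioi 0) hdiff.continuousOn
  · intro s hs
    rw [interior_Ioi] at hs
    exact ((hderiv s hs).differentiableAt).differentiableWithinAt
  · intro s hs
    rw [interior_Ioi] at hs
    rw [(hderiv s hs).deriv]
    exact (hineq s hs).2
end

section
/- Let 0 < λmin ≤ λmax and p ≥ 1. Let A be a p × p diagonal matrix with all diagonal entries in [0, 1] and let b ∈ ℝ^p have all entries nonnegative, and define Φ(λ) = Aλ + b. Then for all λ₁, λ₂ ∈ [λmin, λmax]^p one has D*(Φ(λ₁) ‖ Φ(λ₂)) ≤ D*(λ₁ ‖ λ₂); that is, Φ is contractive with respect to the Bregman divergence induced by λ ↦ ⟨λ, log λ⟩ − ⟨1, λ⟩. -/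
/-- Scalar Bregman divergence `kl(u‖v) = u·log(u/v) − u + v` induced by `u ↦ u log u − u`.
With Lean's conventions (`log 0 = 0`, `0 * x = 0`) this also encodes `kl(0‖0) = 0`. -/
noncomputable def kl (u v : ℝ) : ℝ := u * Real.log (u / v) - u + v

lemma kl_nonneg (u v : ℝ) (hu : 0 < u) (hv : 0 < v) : 0 ≤ kl u v := by
  have h : Real.log (v / u) ≤ v / u - 1 :=
    Real.log_le_sub_one_of_pos (div_pos hv hu)
  have hlog : Real.log (u / v) = - Real.log (v / u) := by
    rw [← Real.log_inv, inv_div]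
  have : 1 - v / u ≤ Real.log (u / v) := by rw [hlog]; linarith
  have h2 : u * (1 - v / u) ≤ u * Real.log (u / v) :=
    mul_le_mul_of_nonneg_left this hu.le
  have : u * (1 - v / u) = u - v := by field_simp
  unfold kl; nlinarith

lemma kl_self (c : ℝ) : kl c c = 0 := by
  unfold kl
  rcases eq_or_ne c 0 with h | h
  · simp [h]
  · rw [div_self h, Real.log_one]; ring

lemma logsum (s t c : ℝ) (hs : 0 < s) (ht : 0 < t) (hc : 0 ≤ c) :
    (s + c) * Real.log ((s + c) / (t + c)) ≤ s * Real.log (s / t) := by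
  rcases eq_or_lt_of_le hc with h | hc
  · simp [← h]
  · have hsc : 0 < s + c := by linarith
    have htc : 0 < t + c := by linarith
    have hr : 0 < t * (s + c) / (s * (t + c)) := by positivity
    have hsplit : (s + c) / (t + c) = (s / t) * (t * (s + c) / (s * (t + c))) := by
      field_simp
    have hlog : Real.log ((s + c) / (t + c)) =
        Real.log (s / t) + Real.log (t * (s + c) / (s * (t + c))) := by
      rw [hsplit, Real.log_mul (by positivity) (by positivity)]
    have h1 : Real.log (t * (s + c) / (s * (t + c))) ≤ t * (s + c) / (s * (t + c)) - 1 :=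
      Real.log_le_sub_one_of_pos hr
    have he1 : t * (s + c) / (s * (t + c)) - 1 = c * (t - s) / (s * (t + c)) := by
      field_simp; ring
    have h1' : s * Real.log (t * (s + c) / (s * (t + c))) ≤ c * (t - s) / (t + c) := by
      have := mul_le_mul_of_nonneg_left (h1.trans_eq he1) hs.le
      refine this.trans_eq ?_
      field_simp
    have h2 : Real.log ((s + c) / (t + c)) ≤ (s + c) / (t + c) - 1 :=
      Real.log_le_sub_one_of_pos (by positivity)
    have he2 : (s + c) / (t + c) - 1 = (s - t) / (t + c) := by field_simp; ring
    have h2' : c * Real.log ((s + c) / (t + c)) ≤ c * (s - t) / (t + c) := by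
      have := mul_le_mul_of_nonneg_left (h2.trans_eq he2) hc.le
      rw [mul_div_assoc]
      exact this
    have hsum : c * (t - s) / (t + c) + c * (s - t) / (t + c) = 0 := by
      field_simp; ring
    have : (s + c) * Real.log ((s + c) / (t + c))
        = s * Real.log (s / t) + s * Real.log (t * (s + c) / (s * (t + c)))
          + c * Real.log ((s + c) / (t + c)) := by
      rw [hlog]; ring
    linarith

lemma kl_scalar (a c u v : ℝ) (ha0 : 0 ≤ a) (ha1 : a ≤ 1) (hc : 0 ≤ c)
    (hu : 0 < u) (hv : 0 < v) : kl (a * u + c) (a * v + c) ≤ kl u v := by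
  rcases eq_or_lt_of_le ha0 with h | ha
  · simp only [← h, zero_mul, zero_add]
    rw [kl_self]
    exact kl_nonneg u v hu hv
  · have hs : 0 < a * u := by positivity
    have ht : 0 < a * v := by positivity
    have hdiv : (a * u) / (a * v) = u / v := mul_div_mul_left u v (ne_of_gt ha)
    have key := logsum (a * u) (a * v) c hs ht hc
    have hkl : kl (a * u + c) (a * v + c) ≤ a * kl u v := by
      unfold kl
      rw [hdiv] at key
      nlinarith
    have : a * kl u v ≤ kl u v := by
      nlinarith [kl_nonneg u v hu hv]
    linarith

/-- Lemma 2 of the paper: the dynamical model `Φ(λ) = Aλ + b`, with `A` diagonal with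
entries in `[0,1]` and `b ⪰ 0`, is contractive with respect to the Bregman divergence
`D*(a‖b) = Σ_k (a_k log(a_k/b_k) − a_k + b_k)` induced by `λ ↦ ⟨λ, log λ⟩ − ⟨1, λ⟩`,
on the box `[λmin, λmax]^p`. -/
theorem stmt_5 (p : ℕ) (hp : 1 ≤ p) (lammin lammax : ℝ)
    (hmin : 0 < lammin) (hle : lammin ≤ lammax)
    (A b : Fin p → ℝ)
    (hA : ∀ k, A k ∈ Set.Icc (0 : ℝ) 1) (hb : ∀ k, 0 ≤ b k)
    (lam₁ lam₂ : Fin p → ℝ)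
    (h₁ : ∀ k, lam₁ k ∈ Set.Icc lammin lammax)
    (h₂ : ∀ k, lam₂ k ∈ Set.Icc lammin lammax) :
    ∑ k, kl (A k * lam₁ k + b k) (A k * lam₂ k + b k) ≤ ∑ k, kl (lam₁ k) (lam₂ k) := by
  apply Finset.sum_le_sum
  intro k _
  exact kl_scalar (A k) (b k) (lam₁ k) (lam₂ k) (hA k).1 (hA k).2 (hb k)
    (lt_of_lt_of_le hmin (h₁ k).1) (lt_of_lt_of_le hmin (h₂ k).1)
end

section
/- For all reals u, v > 0, all a ∈ [0, 1], and all b ≥ 0 with a·u + b > 0 (equivalently a·v + b > 0), one has kl(a·u + b ‖ a·v + b) ≤ a·kl(u ‖ v); when a·u + b = 0 (i.e. a = 0 and b = 0) the left-hand side is 0 by convention and the inequality still holds. -/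
/-- For `u, v > 0`, `a ∈ [0,1]`, `b ≥ 0`: `kl(a·u + b ‖ a·v + b) ≤ a·kl(u‖v)`.
(When `a = 0` and `b = 0`, both sides are `0` under the convention `kl(0‖0) = 0`,
which is automatic with Lean's `log 0 = 0`.) -/
theorem stmt_6 (u v a b : ℝ) (hu : 0 < u) (hv : 0 < v)
    (ha : a ∈ Set.Icc (0 : ℝ) 1) (hb : 0 ≤ b) :
    kl (a * u + b) (a * v + b) ≤ a * kl u v := by
  obtain ⟨ha0, ha1⟩ := ha
  rcases eq_or_lt_of_le ha0 with h | hapos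
  · rcases eq_or_lt_of_le hb with hb0 | hb0
    · simp [kl, ← h, ← hb0]
    · simp [kl, ← h, div_self hb0.ne']
  set s := a * u + b with hs
  set t := a * v + b with ht
  have hspos : 0 < s := by positivity
  have htpos : 0 < t := by positivity
  -- key: s * log (s/t) ≤ a * u * log (u/v)
  have hlog1 : Real.log (s / t) = Real.log ((s * v) / (t * u)) + Real.log (u / v) := by
    rw [Real.log_div hspos.ne' htpos.ne', Real.log_div (by positivity) (by positivity),
      Real.log_div hu.ne' hv.ne', Real.log_mul hspos.ne' hv.ne',
      Real.log_mul htpos.ne' hu.ne']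
    ring
  have h1 : Real.log ((s * v) / (t * u)) ≤ (s * v) / (t * u) - 1 :=
    Real.log_le_sub_one_of_pos (by positivity)
  have h2 : Real.log (s / t) ≤ s / t - 1 :=
    Real.log_le_sub_one_of_pos (by positivity)
  have key : s * Real.log (s / t) ≤ a * u * Real.log (u / v) := by
    have hau : 0 < a * u := by positivity
    have e1 : a * u * Real.log ((s * v) / (t * u)) ≤ a * u * ((s * v) / (t * u) - 1) :=
      mul_le_mul_of_nonneg_left h1 hau.le
    have e2 : b * Real.log (s / t) ≤ b * (s / t - 1) :=
      mul_le_mul_of_nonneg_left h2 hb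
    have hfield : a * u * ((s * v) / (t * u) - 1) + b * (s / t - 1) = 0 := by
      field_simp
      ring
    have : s * Real.log (s / t) = a * u * Real.log ((s * v) / (t * u))
        + a * u * Real.log (u / v) + b * Real.log (s / t) := by
      rw [hlog1]; ring
    nlinarith [e1, e2]
  simp only [kl]
  nlinarith [key]
end

section
/- Fix reals u, v > 0 and a > 0. Then the function b ↦ kl(a·u + b ‖ a·v + b) is nonincreasing on [0, ∞); that is, for all 0 ≤ b₁ ≤ b₂ one has kl(a·u + b₂ ‖ a·v + b₂) ≤ kl(a·u + b₁ ‖ a·v + b₁). -/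
/-- For fixed `u, v > 0` and `a > 0`, the function `b ↦ kl(a·u + b ‖ a·v + b)`
is nonincreasing on `[0, ∞)`. -/
theorem stmt_7 (u v a : ℝ) (hu : 0 < u) (hv : 0 < v) (ha : 0 < a)
    (b₁ b₂ : ℝ) (hb₁ : 0 ≤ b₁) (hb : b₁ ≤ b₂) :
    kl (a * u + b₂) (a * v + b₂) ≤ kl (a * u + b₁) (a * v + b₁) := by
  set g : ℝ → ℝ := fun b => (a*u+b) * (Real.log (a*u+b) - Real.log (a*v+b)) - (a*u+b) + (a*v+b) with hg
  have hx : ∀ b : ℝ, 0 ≤ b → 0 < a*u+b := fun b hb => by positivity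
  have hy : ∀ b : ℝ, 0 ≤ b → 0 < a*v+b := fun b hb => by positivity
  have hder : ∀ b : ℝ, 0 ≤ b →
      HasDerivAt g ((Real.log (a*u+b) - Real.log (a*v+b)) + (1 - (a*u+b)/(a*v+b))) b := by
    intro b hb0
    have h1 : HasDerivAt (fun b : ℝ => a*u+b) 1 b := (hasDerivAt_id b).const_add (a*u)
    have h2 : HasDerivAt (fun b : ℝ => a*v+b) 1 b := (hasDerivAt_id b).const_add (a*v)
    have hl1 : HasDerivAt (fun b : ℝ => Real.log (a*u+b)) ((a*u+b)⁻¹) b := by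
      simpa [Function.comp_def] using (Real.hasDerivAt_log (hx b hb0).ne').comp b h1
    have hl2 : HasDerivAt (fun b : ℝ => Real.log (a*v+b)) ((a*v+b)⁻¹) b := by
      simpa [Function.comp_def] using (Real.hasDerivAt_log (hy b hb0).ne').comp b h2
    have := ((h1.mul (hl1.sub hl2)).sub h1).add h2
    refine this.congr_deriv ?_
    have hxne := (hx b hb0).ne'
    have hyne := (hy b hb0).ne'
    field_simp
    simp only [Pi.sub_apply]
    ring
  have hanti : AntitoneOn g (Set.Ici 0) := by
    apply antitoneOn_of_deriv_nonpos (convex_Ici 0)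
    · exact fun b hb0 => (hder b hb0).continuousAt.continuousWithinAt
    · intro b hb0
      rw [interior_Ici] at hb0
      exact (hder b hb0.le).differentiableAt.differentiableWithinAt
    · intro b hb0
      rw [interior_Ici] at hb0
      rw [(hder b hb0.le).deriv]
      have hxp := hx b hb0.le
      have hyp := hy b hb0.le
      have hle : Real.log ((a*u+b)/(a*v+b)) ≤ (a*u+b)/(a*v+b) - 1 :=
        Real.log_le_sub_one_of_pos (by positivity)
      rw [Real.log_div hxp.ne' hyp.ne'] at hle
      linarith
  have he : ∀ b : ℝ, 0 ≤ b → kl (a*u+b) (a*v+b) = g b := by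
    intro b hb0
    simp only [kl, hg, Real.log_div (hx b hb0).ne' (hy b hb0).ne']
  rw [he b₁ hb₁, he b₂ (hb₁.trans hb)]
  exact hanti hb₁ (Set.mem_Ici.mpr (hb₁.trans hb)) hb
end

section
/- Fix p ≥ 1, δ > 0, α ∈ (0, 1), a delay D ≥ δ, a matrix W ∈ ℝ₊^{p×p}, and a baseline μ̄ ∈ ℝ^p. Let (k_n, τ_n), n = 1, …, N, be a finite list of events with k_n ∈ {1, …, p} and τ_n > 0. Define for each integer t ≥ 1 the vector λ_t ∈ ℝ^p by λ_{t,k} = μ̄_k + Σ_{n : τ_n < δt − D} W_{k,k_n}·α^{δt − τ_n − D}, and define y'_t = Σ_{n : δt − D ≤ τ_n < δ(t+1) − D} e_{k_n}·α^{δ(t+1) − τ_n − D}, where e_j ∈ ℝ^p is the j-th standard basis vector. Then for every t ≥ 1, λ_{t+1} = α^δ·λ_t + W·y'_t + (1 − α^δ)·μ̄. -/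
open scoped Classical

/-- Discrete-time multivariate Hawkes rate with delayed exponential influence
`h(τ) = α^{τ−D}·1_{τ>D}`:
`λ_{t,k} = μ̄_k + Σ_{n : τ_n < δt − D} W_{k,k_n}·α^{δt − τ_n − D}`. -/
noncomputable def delayedHawkesRate (p N : ℕ) (δ α D : ℝ) (W : Matrix (Fin p) (Fin p) ℝ)
    (μbar : Fin p → ℝ) (kn : Fin N → Fin p) (τ : Fin N → ℝ) (t : ℕ) (k : Fin p) : ℝ :=
  μbar k + ∑ n ∈ Finset.univ.filter (fun n => τ n < δ * t - D),
    W k (kn n) * α ^ (δ * t - τ n - D)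

/-- `y'_t = Σ_{n : δt − D ≤ τ_n < δ(t+1) − D} e_{k_n}·α^{δ(t+1) − τ_n − D}`. -/
noncomputable def delayedHawkesY (p N : ℕ) (δ α D : ℝ)
    (kn : Fin N → Fin p) (τ : Fin N → ℝ) (t : ℕ) (j : Fin p) : ℝ :=
  ∑ n ∈ Finset.univ.filter (fun n => δ * t - D ≤ τ n ∧ τ n < δ * (t + 1) - D),
    (if kn n = j then α ^ (δ * (t + 1) - τ n - D) else 0)

/-- The discrete-time Hawkes rate with delayed exponential influence satisfies the
linear dynamics `λ_{t+1} = α^δ·λ_t + W·y'_t + (1 − α^δ)·μ̄` for every `t ≥ 1`. -/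
theorem stmt_10 (p : ℕ) (hp : 1 ≤ p) (δ α D : ℝ) (hδ : 0 < δ)
    (hα : α ∈ Set.Ioo (0 : ℝ) 1) (hD : δ ≤ D)
    (W : Matrix (Fin p) (Fin p) ℝ) (hW : ∀ i j, 0 ≤ W i j)
    (μbar : Fin p → ℝ)
    (N : ℕ) (kn : Fin N → Fin p) (τ : Fin N → ℝ) (hτ : ∀ n, 0 < τ n) :
    ∀ t : ℕ, 1 ≤ t → ∀ k : Fin p,
      delayedHawkesRate p N δ α D W μbar kn τ (t + 1) k =
        α ^ δ * delayedHawkesRate p N δ α D W μbar kn τ t k +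
          W.mulVec (delayedHawkesY p N δ α D kn τ t) k + (1 - α ^ δ) * μbar k := by
  intro t ht k
  have hα0 : (0 : ℝ) < α := hα.1
  unfold delayedHawkesRate delayedHawkesY Matrix.mulVec dotProduct
  set A := Finset.univ.filter (fun n : Fin N => τ n < δ * t - D) with hA
  set B := Finset.univ.filter
      (fun n : Fin N => δ * t - D ≤ τ n ∧ τ n < δ * (t + 1 : ℝ) - D) with hB
  have hsplit : Finset.univ.filter (fun n : Fin N => τ n < δ * ((t : ℕ) + 1 : ℕ) - D)
      = A ∪ B := by
    ext n
    simp only [hA, hB, Finset.mem_filter, Finset.mem_union, Finset.mem_univ, true_and]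
    push_cast
    constructor
    · intro h
      rcases lt_or_ge (τ n) (δ * t - D) with h' | h'
      · exact Or.inl h'
      · exact Or.inr ⟨h', h⟩
    · rintro (h | ⟨_, h⟩)
      · nlinarith
      · exact h
  have hdisj : Disjoint A B := by
    rw [Finset.disjoint_left]
    intro n hnA hnB
    simp only [hA, hB, Finset.mem_filter, Finset.mem_univ, true_and] at hnA hnB
    linarith [hnB.1]
  -- W · y' term
  have hy : (∑ j, W k j * ∑ n ∈ B, (if kn n = j then α ^ (δ * ((t : ℝ) + 1) - τ n - D) else 0))
      = ∑ n ∈ B, W k (kn n) * α ^ (δ * ((t : ℝ) + 1) - τ n - D) := by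
    simp_rw [Finset.mul_sum]
    rw [Finset.sum_comm]
    refine Finset.sum_congr rfl fun n _ => ?_
    simp [mul_ite]
  rw [hsplit, Finset.sum_union hdisj]
  have hstep : ∀ n : Fin N, α ^ (δ * ((t : ℕ) + 1 : ℕ) - τ n - D)
      = α ^ δ * α ^ (δ * t - τ n - D) := by
    intro n
    rw [← Real.rpow_add hα0]
    push_cast
    ring_nf
  have hsumA : (∑ n ∈ A, W k (kn n) * α ^ (δ * ((t : ℕ) + 1 : ℕ) - τ n - D))
      = α ^ δ * ∑ n ∈ A, W k (kn n) * α ^ (δ * t - τ n - D) := by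
    rw [Finset.mul_sum]
    exact Finset.sum_congr rfl fun n _ => by rw [hstep]; ring
  have hsumB : (∑ n ∈ B, W k (kn n) * α ^ (δ * ((t : ℕ) + 1 : ℕ) - τ n - D))
      = ∑ n ∈ B, W k (kn n) * α ^ (δ * ((t : ℝ) + 1) - τ n - D) := by
    refine Finset.sum_congr rfl fun n _ => ?_
    push_cast
    ring_nf
  rw [hsumA, hsumB, hy]
  push_cast
  ring
end

section
/- Fix p ≥ 1, a horizon T > 0, a window size δ > 0 with T/δ a positive integer, α ∈ (0, 1), a matrix W ∈ ℝ₊^{p×p} with all entries satisfying 0 ≤ W_{i,j} ≤ Wmax, and a baseline μ̄ ∈ ℝ^p with μ̄_k ≥ μmin > 0 for all k. Let (k_n, τ_n), n = 1, …, N_T, be the events, with k_n ∈ {1, …, p}, 0 < τ_n ≤ T, and suppose that no actor participates in more than xmax events per unit time (in particular, each actor has at most xmax·δ events in any interval of length δ). Then |L_T(μ) − L_T^{(δ)}(λ)| ≤ (3·p·Wmax/2 + Wmax·xmax·p/μmin − log α)·N_T·δ. -/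
open scoped Classical
open MeasureTheory
set_option maxHeartbeats 1000000

/-- Continuous-time multivariate Hawkes rate with exponential influence
`h(τ) = α^τ·1_{τ>0}`: `μ_k(s) = μ̄_k + Σ_{n : τ_n < s} W_{k,k_n}·α^{s − τ_n}`. -/
noncomputable def contRate (p N : ℕ) (α : ℝ) (W : Matrix (Fin p) (Fin p) ℝ)
    (μbar : Fin p → ℝ) (kn : Fin N → Fin p) (τ : Fin N → ℝ) (k : Fin p) (s : ℝ) : ℝ :=
  μbar k + ∑ n ∈ Finset.univ.filter (fun n => τ n < s), W k (kn n) * α ^ (s - τ n)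

/-- Discretized rate `λ_{t,k} = μ̄_k + Σ_{n : τ̄_n < δt} W_{k,k_n}·α^{δt − τ_n}`,
where `τ̄_n = ⌈τ_n/δ⌉·δ`. -/
noncomputable def discRate (p N : ℕ) (δ α : ℝ) (W : Matrix (Fin p) (Fin p) ℝ)
    (μbar : Fin p → ℝ) (kn : Fin N → Fin p) (τ : Fin N → ℝ) (t : ℕ) (k : Fin p) : ℝ :=
  μbar k + ∑ n ∈ Finset.univ.filter (fun n => (⌈τ n / δ⌉ : ℝ) * δ < δ * t),
    W k (kn n) * α ^ (δ * t - τ n)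

/-- `x_{t,k}`: number of events of actor `k` in the window `((t−1)δ, tδ]`. -/
noncomputable def eventCount (p N : ℕ) (δ : ℝ)
    (kn : Fin N → Fin p) (τ : Fin N → ℝ) (t : ℕ) (k : Fin p) : ℕ :=
  (Finset.univ.filter (fun n => kn n = k ∧ ((t : ℝ) - 1) * δ < τ n ∧ τ n ≤ (t : ℝ) * δ)).card


lemma key2 {x : ℝ} (hx : 0 ≤ x) : 2 * (1 - Real.exp (-x)) ≤ x * (1 + Real.exp (-x)) := by
  set g : ℝ → ℝ := fun y => y * (1 + Real.exp (-y)) - 2 * (1 - Real.exp (-y)) with hg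
  have hd : ∀ y : ℝ, HasDerivAt g (1 - (1 + y) * Real.exp (-y)) y := by
    intro y
    have he : HasDerivAt (fun y : ℝ => Real.exp (-y)) (Real.exp (-y) * (-1)) y :=
      (hasDerivAt_neg y).exp
    have h1 : HasDerivAt (fun y : ℝ => y * (1 + Real.exp (-y)))
        (1 * (1 + Real.exp (-y)) + y * (0 + Real.exp (-y) * (-1))) y :=
      (hasDerivAt_id y).mul ((hasDerivAt_const y 1).add he)
    have h2 : HasDerivAt (fun y : ℝ => 2 * (1 - Real.exp (-y)))
        ((0 - Real.exp (-y) * (-1)) * 2) y := by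
      have := ((hasDerivAt_const y 1).sub he).mul_const (2:ℝ)
      convert this using 2 with z
      · rfl
      · rfl
      rw [Pi.sub_apply]
      ring
    have := h1.sub h2
    convert this using 1
    · rfl
    · rfl
    · rfl
    ring
  have hmono : Monotone g := by
    apply monotone_of_deriv_nonneg
    · exact fun y => (hd y).differentiableAt
    · intro y
      rw [(hd y).deriv]
      have h := Real.add_one_le_exp y
      have hpos := Real.exp_pos (-y)
      have key : (1 + y) * Real.exp (-y) ≤ 1 := by
        rcases le_or_gt (1 + y) 0 with h'|h'
        · nlinarith
        · have := Real.exp_neg y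
          have h2 : (1+y) * Real.exp (-y) ≤ Real.exp y * Real.exp (-y) := by
            apply mul_le_mul_of_nonneg_right _ hpos.le; linarith
          rwa [← Real.exp_add, add_neg_cancel, Real.exp_zero] at h2
      linarith
  have h0 : g 0 = 0 := by simp [hg]
  have := hmono hx
  rw [h0] at this
  simp only [hg] at this
  linarith

lemma tele (g : ℕ → ℝ) (a b : ℕ) (h : a ≤ b) :
    ∑ t ∈ Finset.Ioc a b, (g (t - 1) - g t) = g a - g b := by
  induction b, h using Nat.le_induction with
  | base => simp
  | succ b hb ih =>
      rw [Finset.sum_Ioc_succ_top (by omega), ih]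
      simp only [Nat.add_sub_cancel]
      ring

lemma part1_event (δ α τn : ℝ) (M t₀ : ℕ) (hδ : 0 < δ) (hα0 : 0 < α) (hα1 : α < 1)
    (ht1 : 1 ≤ t₀) (ht2 : t₀ ≤ M) (hr1 : τn ≤ δ * t₀) (hr2 : δ * t₀ < τn + δ) :
    0 ≤ (1 - α ^ (δ * M - τn)) / (-Real.log α) - ∑ t ∈ Finset.Ioc t₀ M, δ * α ^ (δ * t - τn)
    ∧ (1 - α ^ (δ * M - τn)) / (-Real.log α) - ∑ t ∈ Finset.Ioc t₀ M, δ * α ^ (δ * t - τn)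
      ≤ 3 * δ / 2 := by
  set c : ℝ := -Real.log α with hc
  have hcpos : 0 < c := by
    simp only [hc, neg_pos]; exact Real.log_neg hα0 hα1
  set g : ℕ → ℝ := fun t => α ^ (δ * t - τn) with hgdef
  have hgpos : ∀ t, 0 < g t := fun t => Real.rpow_pos_of_pos hα0 _
  set β : ℝ := α ^ δ with hβ
  have hβexp : β = Real.exp (-(c * δ)) := by
    rw [hβ, Real.rpow_def_of_pos hα0, hc]; ring_nf
  have hβ0 : 0 < β := Real.rpow_pos_of_pos hα0 _
  -- (i) : c * δ * β ≤ 1 - β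
  have hi : c * δ * β ≤ 1 - β := by
    have h1 := Real.add_one_le_exp (c * δ)
    have h2 : Real.exp (c * δ) * β = 1 := by
      rw [hβexp, ← Real.exp_add]; simp
    nlinarith [hβ0]
  -- (ii) : 2 * (1 - β) ≤ c * δ * (1 + β)
  have hii : 2 * (1 - β) ≤ c * δ * (1 + β) := by
    have := key2 (x := c * δ) (by positivity)
    rwa [← hβexp] at this
  have hstep : ∀ t ∈ Finset.Ioc t₀ M, g t = g (t - 1) * β := by
    intro t ht
    simp only [Finset.mem_Ioc] at ht
    have h1 : (1:ℕ) ≤ t := le_trans ht1 ht.1.le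
    have hcast : ((t - 1 : ℕ) : ℝ) = (t : ℝ) - 1 := by
      push_cast [Nat.cast_sub h1]; ring
    rw [hgdef, hβ]
    simp only [hcast]
    rw [← Real.rpow_add hα0]
    ring_nf
  -- per-term bounds
  have hL : ∀ t ∈ Finset.Ioc t₀ M, c * (δ * g t) ≤ g (t - 1) - g t := by
    intro t ht
    rw [hstep t ht]
    have := hgpos (t - 1)
    nlinarith
  have hTr : ∀ t ∈ Finset.Ioc t₀ M, 2 * (g (t - 1) - g t) ≤ c * δ * (g (t - 1) + g t) := by
    intro t ht
    rw [hstep t ht]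
    have := hgpos (t - 1)
    nlinarith
  have htele := tele g t₀ M ht2
  set S : ℝ := ∑ t ∈ Finset.Ioc t₀ M, δ * α ^ (δ * t - τn) with hS
  have hSg : S = ∑ t ∈ Finset.Ioc t₀ M, δ * g t := rfl
  have hcS : c * S ≤ g t₀ - g M := by
    rw [hSg, Finset.mul_sum, ← htele]
    exact Finset.sum_le_sum (fun t ht => by
      have := hL t ht; linarith [this])
  have hgt₀le : g t₀ ≤ 1 := by
    apply Real.rpow_le_one hα0.le hα1.le
    linarith
  have hgMpos := hgpos M
  have hgt₀M : g t₀ - g M = ∑ t ∈ Finset.Ioc t₀ M, (g (t-1) - g t) := htele.symm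
  have hmono : 0 ≤ g t₀ - g M := by
    rw [hgt₀M]
    apply Finset.sum_nonneg
    intro t ht
    have h1 := hL t ht
    have h2 := hgpos t
    nlinarith [mul_pos hcpos (mul_pos hδ h2)]
  have hgM : g M = α ^ (δ * M - τn) := rfl
  constructor
  · rw [sub_nonneg, ← hgM, le_div_iff₀ hcpos]
    calc S * c = c * S := mul_comm _ _
      _ ≤ g t₀ - g M := hcS
      _ ≤ 1 - g M := by linarith
  · -- upper bound
    have h2 : (g t₀ - g M) - c * S ≤ c * δ * (g t₀ - g M) / 2 := by
      rw [hSg, Finset.mul_sum, hgt₀M, ← Finset.sum_sub_distrib, Finset.mul_sum, Finset.sum_div]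
      apply Finset.sum_le_sum
      intro t ht
      have h1 := hTr t ht
      have h2 := hL t ht
      nlinarith [h1, h2, hgpos t, hgpos (t-1), mul_pos hcpos hδ]
    have h3 : 1 - g t₀ ≤ c * δ := by
      have hr : δ * t₀ - τn ≤ δ := by linarith
      have hr0 : 0 ≤ δ * t₀ - τn := by linarith
      have : g t₀ = Real.exp (-(c * (δ * t₀ - τn))) := by
        rw [hgdef]; simp only []
        rw [Real.rpow_def_of_pos hα0, hc]; ring_nf
      have h4 := Real.add_one_le_exp (-(c * (δ * t₀ - τn)))
      have h5 : c * (δ * t₀ - τn) ≤ c * δ := by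
        apply mul_le_mul_of_nonneg_left hr hcpos.le
      rw [this]; linarith
    rw [← hgM, sub_le_iff_le_add, div_le_iff₀ hcpos]
    -- 1 - g M ≤ (3δ/2 + S) * c
    have hcd : 0 < c * δ := mul_pos hcpos hδ
    have hb : c * δ * (g t₀ - g M) ≤ c * δ * 1 :=
      mul_le_mul_of_nonneg_left (by linarith) hcd.le
    clear_value c g S β
    nlinarith [h2, h3, hb, hcS]


lemma cont_rpow (α τn : ℝ) (hα0 : 0 < α) : Continuous (fun s : ℝ => α ^ (s - τn)) := by
  have : (fun s : ℝ => α ^ (s - τn)) = fun s => Real.exp (Real.log α * (s - τn)) := by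
    funext s; rw [Real.rpow_def_of_pos hα0]
  rw [this]
  exact Real.continuous_exp.comp (continuous_const.mul (continuous_id.sub continuous_const))

lemma integral_exp_piece (α τn T : ℝ) (hα0 : 0 < α) (hα1 : α < 1) (hτT : τn ≤ T) :
    ∫ s in τn..T, α ^ (s - τn) = (1 - α ^ (T - τn)) / (-Real.log α) := by
  have hlog : Real.log α < 0 := Real.log_neg hα0 hα1
  have hlog0 : Real.log α ≠ 0 := hlog.ne
  have hrw : ∀ s : ℝ, α ^ (s - τn) = Real.exp (Real.log α * (s - τn)) := fun s =>
    Real.rpow_def_of_pos hα0 _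
  have hF : ∀ s : ℝ, HasDerivAt (fun u => Real.exp (Real.log α * (u - τn)) / Real.log α)
      (α ^ (s - τn)) s := by
    intro s
    have h1 : HasDerivAt (fun u : ℝ => Real.log α * (u - τn)) (Real.log α * 1) s :=
      ((hasDerivAt_id s).sub_const τn).const_mul (Real.log α)
    have h2 := (h1.exp).div_const (Real.log α)
    convert h2 using 1
    · rfl
    · rfl
    rw [hrw]
    field_simp
  have hint : IntervalIntegrable (fun s : ℝ => α ^ (s - τn)) volume τn T :=
    (cont_rpow α τn hα0).intervalIntegrable _ _
  rw [intervalIntegral.integral_eq_sub_of_hasDerivAt (fun s _ => hF s) hint]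
  have e0 : Real.exp (Real.log α * (τn - τn)) = 1 := by simp
  rw [hrw, e0, div_neg, eq_neg_iff_add_eq_zero, div_sub_div_same, ← add_div]
  rw [show Real.exp (Real.log α * (T - τn)) - 1 + (1 - Real.exp (Real.log α * (T - τn))) = 0 by ring,
    zero_div]

lemma ii_ite (w α τn : ℝ) (hα0 : 0 < α) (a b : ℝ) :
    IntervalIntegrable (fun s : ℝ => if τn < s then w * α ^ (s - τn) else 0) volume a b := by
  have hind : (fun s : ℝ => if τn < s then w * α ^ (s - τn) else 0)
      = (Set.Ioi τn).indicator (fun s => w * α ^ (s - τn)) := by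
    funext s; simp [Set.indicator_apply, Set.mem_Ioi]
  rw [hind, intervalIntegrable_iff]
  have hc : Continuous (fun s : ℝ => w * α ^ (s - τn)) := continuous_const.mul (cont_rpow α τn hα0)
  have h3 : IntervalIntegrable (fun s : ℝ => w * α ^ (s - τn)) volume a b :=
    hc.intervalIntegrable a b
  rw [intervalIntegrable_iff] at h3
  exact h3.indicator measurableSet_Ioi

lemma integral_ite (w α τn T : ℝ) (hα0 : 0 < α) (hα1 : α < 1) (hτ : 0 < τn) (hτT : τn ≤ T) :
    ∫ s in (0:ℝ)..T, (if τn < s then w * α ^ (s - τn) else 0)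
      = w * ((1 - α ^ (T - τn)) / (-Real.log α)) := by
  rw [← intervalIntegral.integral_add_adjacent_intervals
    (ii_ite w α τn hα0 0 τn) (ii_ite w α τn hα0 τn T)]
  have h1 : ∫ s in (0:ℝ)..τn, (if τn < s then w * α ^ (s - τn) else 0) = 0 := by
    rw [intervalIntegral.integral_congr (g := fun _ => (0:ℝ))]
    · simp
    · intro s hs
      rw [Set.uIcc_of_le hτ.le] at hs
      simp only [Set.mem_Icc] at hs
      simp [not_lt.mpr hs.2]
  have h2 : ∫ s in τn..T, (if τn < s then w * α ^ (s - τn) else 0)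
      = ∫ s in τn..T, w * α ^ (s - τn) := by
    apply intervalIntegral.integral_congr_ae
    filter_upwards with s hs
    rw [Set.uIoc_of_le hτT] at hs
    simp [hs.1]
  rw [h1, h2, zero_add, intervalIntegral.integral_const_mul, integral_exp_piece α τn T hα0 hα1 hτT]

lemma filter_eq_Ioc (δ : ℝ) (hδ : 0 < δ) (M : ℕ) (x : ℝ) (hx : 0 < x) :
    (Finset.Icc 1 M).filter (fun t : ℕ => (⌈x / δ⌉ : ℝ) * δ < δ * t)
      = Finset.Ioc (⌈x / δ⌉.toNat) M := by
  have hceil : (1 : ℤ) ≤ ⌈x / δ⌉ := by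
    have : (0:ℤ) < ⌈x / δ⌉ := Int.ceil_pos.mpr (div_pos hx hδ)
    omega
  have h' : ((⌈x / δ⌉.toNat : ℕ) : ℤ) = ⌈x / δ⌉ := Int.toNat_of_nonneg (by omega)
  have hcast : ((⌈x / δ⌉.toNat : ℕ) : ℝ) = (⌈x / δ⌉ : ℝ) := by exact_mod_cast congrArg (fun z : ℤ => (z:ℝ)) h'
  ext t
  simp only [Finset.mem_filter, Finset.mem_Icc, Finset.mem_Ioc]
  constructor
  · rintro ⟨⟨h1, h2⟩, h3⟩
    refine ⟨?_, h2⟩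
    have : (⌈x / δ⌉ : ℝ) < t := by
      have := (mul_lt_mul_iff_of_pos_right hδ).mp (by linarith [h3] : (⌈x / δ⌉ : ℝ) * δ < (t:ℝ) * δ)
      exact this
    rw [← hcast] at this
    exact_mod_cast this
  · rintro ⟨h1, h2⟩
    have h1' : (1:ℕ) ≤ ⌈x / δ⌉.toNat := by omega
    refine ⟨⟨by omega, h2⟩, ?_⟩
    have : ((⌈x / δ⌉.toNat : ℕ) : ℝ) < t := by exact_mod_cast h1
    rw [hcast] at this
    nlinarith
lemma sumB1 (p N : ℕ) (δ α : ℝ) (W : Matrix (Fin p) (Fin p) ℝ)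
    (μbar : Fin p → ℝ) (kn : Fin N → Fin p) (τ : Fin N → ℝ) (M : ℕ) (k : Fin p)
    (hδ : 0 < δ) (hτ : ∀ n, 0 < τ n) :
    ∑ t ∈ Finset.Icc 1 M, δ * discRate p N δ α W μbar kn τ t k
      = M * (δ * μbar k) + ∑ n, W k (kn n) *
          ∑ t ∈ Finset.Ioc (⌈τ n / δ⌉.toNat) M, δ * α ^ (δ * t - τ n) := by
  simp only [discRate, mul_add, Finset.sum_add_distrib]
  congr 1
  · rw [Finset.sum_const, Nat.card_Icc]
    simp [nsmul_eq_mul]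
  · have step1 : ∀ t : ℕ, δ * ∑ n ∈ Finset.univ.filter (fun n => (⌈τ n / δ⌉ : ℝ) * δ < δ * t),
        W k (kn n) * α ^ (δ * t - τ n)
        = ∑ n : Fin N, if (⌈τ n / δ⌉ : ℝ) * δ < δ * t then W k (kn n) * (δ * α ^ (δ * t - τ n)) else 0 := by
      intro t
      rw [Finset.mul_sum, Finset.sum_filter]
      apply Finset.sum_congr rfl
      intro n _
      split <;> ring
    simp only [step1]
    rw [Finset.sum_comm]
    apply Finset.sum_congr rfl
    intro n _
    rw [← Finset.sum_filter, filter_eq_Ioc δ hδ M (τ n) (hτ n), Finset.mul_sum]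

lemma sumA1 (p N : ℕ) (T α : ℝ) (W : Matrix (Fin p) (Fin p) ℝ)
    (μbar : Fin p → ℝ) (kn : Fin N → Fin p) (τ : Fin N → ℝ) (k : Fin p)
    (hα0 : 0 < α) (hα1 : α < 1) (hτ : ∀ n, 0 < τ n ∧ τ n ≤ T) :
    ∫ s in (0:ℝ)..T, contRate p N α W μbar kn τ k s
      = μbar k * T + ∑ n, W k (kn n) * ((1 - α ^ (T - τ n)) / (-Real.log α)) := by
  have hfeq : ∀ s : ℝ, contRate p N α W μbar kn τ k s
      = μbar k + ∑ n, (if τ n < s then W k (kn n) * α ^ (s - τ n) else 0) := by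
    intro s; rw [contRate, Finset.sum_filter]
  simp only [hfeq]
  have hg : IntervalIntegrable
      (fun s : ℝ => ∑ n : Fin N, if τ n < s then W k (kn n) * α ^ (s - τ n) else 0) volume 0 T := by
    have h := IntervalIntegrable.sum Finset.univ
      (f := fun (n : Fin N) => fun s : ℝ => if τ n < s then W k (kn n) * α ^ (s - τ n) else 0)
      (fun n _ => ii_ite (W k (kn n)) α (τ n) hα0 0 T)
    convert h using 1
    · rfl
    funext s
    simp [Finset.sum_apply]
  rw [intervalIntegral.integral_add (intervalIntegrable_const) hg,
    intervalIntegral.integral_const,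
    intervalIntegral.integral_finset_sum
      (fun n _ => ii_ite (W k (kn n)) α (τ n) hα0 0 T)]
  congr 1
  · simp [mul_comm]
  · exact Finset.sum_congr rfl fun n _ =>
      integral_ite (W k (kn n)) α (τ n) T hα0 hα1 (hτ n).1 (hτ n).2

lemma ceil_char (δ x : ℝ) (hδ : 0 < δ) (hx : 0 < x) (t : ℕ) :
    ((((t:ℝ) - 1) * δ < x ∧ x ≤ (t:ℝ) * δ) ↔ t = ⌈x / δ⌉.toNat) := by
  have hc1 : (1:ℤ) ≤ ⌈x / δ⌉ := by
    have : (0:ℤ) < ⌈x / δ⌉ := Int.ceil_pos.mpr (div_pos hx hδ)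
    omega
  constructor
  · rintro ⟨h1, h2⟩
    have hu : ⌈x / δ⌉ ≤ (t : ℤ) := Int.ceil_le.mpr (by
      push_cast
      rw [div_le_iff₀ hδ]
      exact h2)
    have hl : ((t : ℤ) - 1) < ⌈x / δ⌉ := Int.lt_ceil.mpr (by
      push_cast
      rw [lt_div_iff₀ hδ]
      exact h1)
    omega
  · intro ht
    have htz : (t : ℤ) = ⌈x / δ⌉ := by omega
    constructor
    · have := Int.lt_ceil.mp (show (t:ℤ) - 1 < ⌈x / δ⌉ by omega)
      push_cast at this
      have h2 := mul_lt_mul_of_pos_right this hδ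
      have hxd : (x/δ)*δ = x := by field_simp
      nlinarith
    · have := Int.le_ceil (x / δ)
      rw [← htz] at this
      push_cast at this
      calc x = (x / δ) * δ := by field_simp
        _ ≤ (t : ℝ) * δ := by nlinarith [this]

lemma sumB2 (p N M : ℕ) (δ : ℝ) (hδ : 0 < δ)
    (kn : Fin N → Fin p) (τ : Fin N → ℝ)
    (hτ : ∀ n, 0 < τ n) (ht₀M : ∀ n, ⌈τ n / δ⌉.toNat ≤ M) (L : ℕ → Fin p → ℝ) :
    ∑ k, ∑ t ∈ Finset.Icc 1 M, (eventCount p N δ kn τ t k : ℝ) * L t k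
      = ∑ n, L (⌈τ n / δ⌉.toNat) (kn n) := by
  have step1 : ∀ (k : Fin p) (t : ℕ), (eventCount p N δ kn τ t k : ℝ) * L t k
      = ∑ n : Fin N, if kn n = k ∧ ((t : ℝ) - 1) * δ < τ n ∧ τ n ≤ (t : ℝ) * δ then L t k else 0 := by
    intro k t
    rw [← Finset.sum_filter, Finset.sum_const, eventCount, nsmul_eq_mul]
  simp only [step1]
  rw [Finset.sum_comm]
  have h2 : ∀ t : ℕ, (∑ k : Fin p, ∑ n : Fin N,
      if kn n = k ∧ ((t : ℝ) - 1) * δ < τ n ∧ τ n ≤ (t : ℝ) * δ then L t k else 0)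
      = ∑ n : Fin N, ∑ k : Fin p,
      if kn n = k ∧ ((t : ℝ) - 1) * δ < τ n ∧ τ n ≤ (t : ℝ) * δ then L t k else 0 :=
    fun t => Finset.sum_comm
  simp only [h2]
  rw [Finset.sum_comm]
  refine Finset.sum_congr rfl fun n _ => ?_
  have ht₀1 : 1 ≤ ⌈τ n / δ⌉.toNat := by
    have : (0:ℤ) < ⌈τ n / δ⌉ := Int.ceil_pos.mpr (div_pos (hτ n) hδ)
    omega
  rw [Finset.sum_eq_single_of_mem (⌈τ n / δ⌉.toNat)
      (Finset.mem_Icc.mpr ⟨ht₀1, ht₀M n⟩)]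
  · have hcond := (ceil_char δ (τ n) hδ (hτ n) (⌈τ n / δ⌉.toNat)).mpr rfl
    rw [Finset.sum_eq_single (kn n)]
    · simp [hcond.1, hcond.2]
    · intro k _ hkne
      rw [if_neg]
      rintro ⟨h, -⟩
      exact hkne h.symm
    · simp
  · intro t _ htne
    apply Finset.sum_eq_zero
    intro k _
    have : ¬ (kn n = k ∧ ((t : ℝ) - 1) * δ < τ n ∧ τ n ≤ (t : ℝ) * δ) := by
      rintro ⟨-, h1, h2⟩
      exact htne ((ceil_char δ (τ n) hδ (hτ n) t).mp ⟨h1, h2⟩)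
    simp [this]

lemma part2_event (p N : ℕ) (δ α Wmax μmin xmax : ℝ)
    (hδ : 0 < δ) (hα0 : 0 < α) (hα1 : α < 1)
    (W : Matrix (Fin p) (Fin p) ℝ) (hW : ∀ i j, 0 ≤ W i j ∧ W i j ≤ Wmax)
    (μbar : Fin p → ℝ) (hμmin : 0 < μmin) (hμ : ∀ k, μmin ≤ μbar k)
    (kn : Fin N → Fin p) (τ : Fin N → ℝ) (hτ : ∀ m, 0 < τ m)
    (hrate : ∀ (k : Fin p) (a : ℝ),
      ((Finset.univ.filter (fun m => kn m = k ∧ a < τ m ∧ τ m ≤ a + δ)).card : ℝ) ≤ xmax * δ)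
    (n : Fin N) :
    0 ≤ Real.log (contRate p N α W μbar kn τ (kn n) (τ n))
        - Real.log (discRate p N δ α W μbar kn τ (⌈τ n / δ⌉.toNat) (kn n)) ∧
    Real.log (contRate p N α W μbar kn τ (kn n) (τ n))
        - Real.log (discRate p N δ α W μbar kn τ (⌈τ n / δ⌉.toNat) (kn n))
      ≤ δ * (-Real.log α) + Wmax * (xmax * δ) * p / μmin := by
  set t : ℕ := ⌈τ n / δ⌉.toNat with htdef
  have hcond := (ceil_char δ (τ n) hδ (hτ n) t).mpr rfl
  have hd1 : τ n ≤ δ * t := by rw [mul_comm]; exact hcond.2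
  have hd2 : δ * t < τ n + δ := by nlinarith [hcond.1]
  have hWmax0 : 0 ≤ Wmax := le_trans (hW (kn n) (kn n)).1 (hW (kn n) (kn n)).2
  set B : Finset (Fin N) := Finset.univ.filter (fun m => (⌈τ m / δ⌉ : ℝ) * δ < δ * t) with hB
  set A : Finset (Fin N) := Finset.univ.filter (fun m => τ m < τ n) with hA
  have hBA : B ⊆ A := by
    intro m hm
    rw [hB, Finset.mem_filter] at hm
    rw [hA, Finset.mem_filter]
    refine ⟨Finset.mem_univ m, ?_⟩
    have h1 : (⌈τ m / δ⌉ : ℝ) < t := by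
      have := hm.2
      nlinarith
    have h2 : ⌈τ m / δ⌉ < (t : ℤ) := by exact_mod_cast h1
    have h3 : τ m ≤ (⌈τ m / δ⌉ : ℝ) * δ := by
      have := Int.le_ceil (τ m / δ)
      calc τ m = (τ m / δ) * δ := by field_simp
        _ ≤ (⌈τ m / δ⌉ : ℝ) * δ := by nlinarith [this]
    have h4 : (⌈τ m / δ⌉ : ℝ) ≤ (t : ℝ) - 1 := by
      have h5 : (⌈τ m / δ⌉ : ℤ) + 1 ≤ (t:ℤ) := by omega
      have h6 : ((⌈τ m / δ⌉ : ℤ) : ℝ) + 1 ≤ ((t:ℕ) : ℝ) := by exact_mod_cast h5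
      linarith
    calc τ m ≤ (⌈τ m / δ⌉ : ℝ) * δ := h3
      _ ≤ ((t:ℝ) - 1) * δ := by nlinarith
      _ < τ n := hcond.1
  set F : Fin N → ℝ := fun m => W (kn n) (kn m) * α ^ (τ n - τ m) with hF
  have hFnn : ∀ m, 0 ≤ F m := fun m =>
    mul_nonneg (hW _ _).1 (Real.rpow_pos_of_pos hα0 _).le
  have hFle : ∀ m ∈ A, F m ≤ Wmax := by
    intro m hm
    rw [hA, Finset.mem_filter] at hm
    have hx1 : α ^ (τ n - τ m) ≤ 1 :=
      Real.rpow_le_one hα0.le hα1.le (by linarith [hm.2])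
    calc F m ≤ Wmax * α ^ (τ n - τ m) :=
          mul_le_mul_of_nonneg_right (hW _ _).2 (Real.rpow_pos_of_pos hα0 _).le
      _ ≤ Wmax * 1 := mul_le_mul_of_nonneg_left hx1 hWmax0
      _ = Wmax := mul_one _
  set q : ℝ := α ^ (δ * (t:ℝ) - τ n) with hq
  have hq0 : 0 < q := Real.rpow_pos_of_pos hα0 _
  have hq1 : q ≤ 1 := Real.rpow_le_one hα0.le hα1.le (by linarith)
  have hμc : contRate p N α W μbar kn τ (kn n) (τ n) = μbar (kn n) + ∑ m ∈ A, F m := rfl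
  have hlamc : discRate p N δ α W μbar kn τ t (kn n) = μbar (kn n) + q * ∑ m ∈ B, F m := by
    rw [discRate, Finset.mul_sum]
    congr 1
    apply Finset.sum_congr rfl
    intro m _
    rw [hF, hq]
    have : α ^ (δ * (t:ℝ) - τ m) = α ^ (δ * (t:ℝ) - τ n) * α ^ (τ n - τ m) := by
      rw [← Real.rpow_add hα0]; ring_nf
    rw [this]; ring
  set SA : ℝ := ∑ m ∈ A, F m with hSA
  set SB : ℝ := ∑ m ∈ B, F m with hSB
  have hSBnn : 0 ≤ SB := Finset.sum_nonneg fun m _ => hFnn m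
  have hSAB : SB ≤ SA := Finset.sum_le_sum_of_subset_of_nonneg hBA fun m _ _ => hFnn m
  set E : ℝ := SA - SB with hE
  have hEnn : 0 ≤ E := by rw [hE]; linarith
  have hEsum : E = ∑ m ∈ A \ B, F m := by
    rw [hE, hSA, hSB, ← Finset.sum_sdiff hBA]; ring
  clear_value t B A F q SA SB E
  -- bound E
  have hcard : ((A \ B).card : ℝ) ≤ xmax * δ * p := by
    have hfib := Finset.card_eq_sum_card_fiberwise
      (f := kn) (s := A \ B) (t := Finset.univ) (fun x _ => Finset.mem_univ _)
    have hfiber : ∀ k' : Fin p, (((A \ B).filter (fun m => kn m = k')).card : ℝ) ≤ xmax * δ := by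
      intro k'
      have hsub : (A \ B).filter (fun m => kn m = k') ⊆
          Finset.univ.filter (fun m => kn m = k' ∧ ((t:ℝ) - 1) * δ < τ m ∧ τ m ≤ ((t:ℝ) - 1) * δ + δ) := by
        intro m hm
        simp only [Finset.mem_filter, Finset.mem_sdiff, hA, hB] at hm
        obtain ⟨⟨hmA, hmB⟩, hmk⟩ := hm
        simp only [Finset.mem_filter, Finset.mem_univ, true_and] at hmA hmB ⊢
        refine ⟨hmk, ?_, ?_⟩
        · -- (t-1)δ < τ m  from m ∉ B
          have hnot : ¬ ((⌈τ m / δ⌉ : ℝ) * δ < δ * t) := hmB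
          have hge : (t : ℝ) ≤ (⌈τ m / δ⌉ : ℝ) := by nlinarith [not_lt.mp hnot]
          have hlt : ((t : ℤ) - 1) < ⌈τ m / δ⌉ := by
            have : (t : ℤ) ≤ ⌈τ m / δ⌉ := by exact_mod_cast hge
            omega
          have h7 := Int.lt_ceil.mp hlt
          push_cast at h7
          have h8 := mul_lt_mul_of_pos_right h7 hδ
          have h9 : (τ m / δ) * δ = τ m := by field_simp
          linarith
        · have : τ m < τ n := hmA
          nlinarith [hcond.2, this]
      calc (((A \ B).filter (fun m => kn m = k')).card : ℝ)
          ≤ ((Finset.univ.filter (fun m => kn m = k' ∧ ((t:ℝ) - 1) * δ < τ m ∧ τ m ≤ ((t:ℝ) - 1) * δ + δ)).card : ℝ) := by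
            exact_mod_cast Finset.card_le_card hsub
        _ ≤ xmax * δ := hrate k' (((t:ℝ) - 1) * δ)
    calc ((A \ B).card : ℝ) = ∑ k' : Fin p, (((A \ B).filter (fun m => kn m = k')).card : ℝ) := by
          rw [hfib]; push_cast; ring
      _ ≤ ∑ _k' : Fin p, xmax * δ := Finset.sum_le_sum (fun k' _ => hfiber k')
      _ = xmax * δ * p := by rw [Finset.sum_const]; simp [nsmul_eq_mul]; ring
  have hEle : E ≤ Wmax * (xmax * δ) * p := by
    have h1 : E ≤ Wmax * ((A \ B).card : ℝ) := by
      rw [hEsum]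
      calc ∑ m ∈ A \ B, F m ≤ ∑ m ∈ A \ B, Wmax :=
            Finset.sum_le_sum (fun m hm => hFle m (Finset.mem_sdiff.mp hm).1)
        _ = ((A \ B).card : ℝ) * Wmax := by rw [Finset.sum_const, nsmul_eq_mul]
        _ = Wmax * ((A \ B).card : ℝ) := mul_comm _ _
    calc E ≤ Wmax * ((A \ B).card : ℝ) := h1
      _ ≤ Wmax * (xmax * δ * p) := mul_le_mul_of_nonneg_left hcard hWmax0
      _ = Wmax * (xmax * δ) * p := by ring
  -- positivity
  have hμbar : μmin ≤ μbar (kn n) := hμ (kn n)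
  have hlampos : 0 < discRate p N δ α W μbar kn τ t (kn n) := by
    rw [hlamc]; nlinarith [mul_nonneg hq0.le hSBnn]
  have hlammin : μmin ≤ discRate p N δ α W μbar kn τ t (kn n) := by
    rw [hlamc]; nlinarith [mul_nonneg hq0.le hSBnn]
  have hμpos : 0 < contRate p N α W μbar kn τ (kn n) (τ n) := by
    rw [hμc]
    have : 0 ≤ SA := le_trans hSBnn hSAB
    nlinarith
  have hlammu : discRate p N δ α W μbar kn τ t (kn n) ≤ contRate p N α W μbar kn τ (kn n) (τ n) := by
    rw [hlamc, hμc]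
    nlinarith [mul_le_mul_of_nonneg_right hq1 hSBnn]
  constructor
  · have := Real.log_le_log hlampos hlammu
    linarith
  · -- upper bound
    set lam : ℝ := discRate p N δ α W μbar kn τ t (kn n) with hlam
    have hkey : contRate p N α W μbar kn τ (kn n) (τ n) ≤ (lam + E) / q := by
      rw [le_div_iff₀ hq0]
      rw [hμc, hlamc]
      have h1 : q * μbar (kn n) ≤ μbar (kn n) := by nlinarith
      have h2 : q * E ≤ E := by nlinarith
      nlinarith
    have hlog1 : Real.log (contRate p N α W μbar kn τ (kn n) (τ n))
        ≤ Real.log (lam + E) - Real.log q := by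
      calc Real.log (contRate p N α W μbar kn τ (kn n) (τ n))
          ≤ Real.log ((lam + E) / q) := Real.log_le_log hμpos hkey
        _ = Real.log (lam + E) - Real.log q := Real.log_div (by positivity) hq0.ne'
    have hlogq : -Real.log q ≤ δ * (-Real.log α) := by
      rw [hq, Real.log_rpow hα0]
      have hlogα : Real.log α < 0 := Real.log_neg hα0 hα1
      nlinarith [hd1, hd2]
    have hlog2 : Real.log (lam + E) - Real.log lam ≤ E / μmin := by
      have h1 : Real.log (lam + E) - Real.log lam = Real.log ((lam + E) / lam) := by
        rw [Real.log_div (by positivity) hlampos.ne']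
      rw [h1]
      have h2 := Real.log_le_sub_one_of_pos (show 0 < (lam + E) / lam by positivity)
      have h3 : (lam + E) / lam - 1 = E / lam := by field_simp; ring
      have h4 : E / lam ≤ E / μmin := by
        rw [div_le_div_iff₀ hlampos hμmin]
        exact mul_le_mul_of_nonneg_left hlammin hEnn
      linarith
    have hEdiv : E / μmin ≤ Wmax * (xmax * δ) * p / μmin := by
      rw [div_le_div_iff₀ hμmin hμmin]
      nlinarith
    linarith [hlog1, hlogq, hlog2, hEdiv]

/-- Lemma 1 of the paper: for exponential influence `h(τ) = α^τ·1_{τ>0}`, the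
continuous-time Hawkes negative log likelihood `L_T(μ)` and its discrete-time
approximation `L_T^{(δ)}(λ)` differ by at most `C·N_T·δ` with
`C = 3pWmax/2 + Wmax·xmax·p/μmin − log α`. -/
theorem stmt_14 (p : ℕ) (hp : 1 ≤ p) (T δ α Wmax μmin xmax : ℝ) (M : ℕ)
    (hδ : 0 < δ) (hM : 0 < M) (hT : T = M * δ)
    (hα : α ∈ Set.Ioo (0 : ℝ) 1)
    (W : Matrix (Fin p) (Fin p) ℝ) (hW : ∀ i j, 0 ≤ W i j ∧ W i j ≤ Wmax)
    (μbar : Fin p → ℝ) (hμmin : 0 < μmin) (hμ : ∀ k, μmin ≤ μbar k)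
    (N : ℕ) (kn : Fin N → Fin p) (τ : Fin N → ℝ)
    (hτ : ∀ n, 0 < τ n ∧ τ n ≤ T)
    (hrate : ∀ (k : Fin p) (a : ℝ),
      ((Finset.univ.filter (fun n => kn n = k ∧ a < τ n ∧ τ n ≤ a + δ)).card : ℝ)
        ≤ xmax * δ) :
    |((∑ k, ∫ s in (0:ℝ)..T, contRate p N α W μbar kn τ k s) -
        ∑ n, Real.log (contRate p N α W μbar kn τ (kn n) (τ n))) -
      ∑ k, ∑ t ∈ Finset.Icc 1 M,
        (δ * discRate p N δ α W μbar kn τ t k -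
          (eventCount p N δ kn τ t k : ℝ) * Real.log (discRate p N δ α W μbar kn τ t k))|
      ≤ (3 * p * Wmax / 2 + Wmax * xmax * p / μmin - Real.log α) * N * δ := by
  obtain ⟨hα0, hα1⟩ := hα
  have hτpos : ∀ n, 0 < τ n := fun n => (hτ n).1
  have hlogα : Real.log α < 0 := Real.log_neg hα0 hα1
  set k0 : Fin p := ⟨0, hp⟩ with hk0
  have hWmax0 : 0 ≤ Wmax := le_trans (hW k0 k0).1 (hW k0 k0).2
  have hxδ : 0 ≤ xmax * δ := le_trans (Nat.cast_nonneg _) (hrate k0 0)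
  -- ceiling facts
  have ht₀M : ∀ n, ⌈τ n / δ⌉.toNat ≤ M := by
    intro n
    have h1 : τ n / δ ≤ (M : ℝ) := by
      rw [div_le_iff₀ hδ]
      calc τ n ≤ T := (hτ n).2
        _ = (M:ℝ) * δ := hT
    have h2 : ⌈τ n / δ⌉ ≤ (M : ℤ) := Int.ceil_le.mpr (by exact_mod_cast h1)
    omega
  have ht₀1 : ∀ n, 1 ≤ ⌈τ n / δ⌉.toNat := by
    intro n
    have : (0:ℤ) < ⌈τ n / δ⌉ := Int.ceil_pos.mpr (div_pos (hτpos n) hδ)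
    omega
  have hceil : ∀ n, ((⌈τ n / δ⌉.toNat : ℕ) - 1 : ℝ) * δ < τ n ∧
      τ n ≤ ((⌈τ n / δ⌉.toNat : ℕ) : ℝ) * δ := fun n =>
    (ceil_char δ (τ n) hδ (hτpos n) _).mpr rfl
  set I : Fin N → ℝ := fun n => (1 - α ^ (T - τ n)) / (-Real.log α) with hI
  set S : Fin N → ℝ := fun n =>
    ∑ t ∈ Finset.Ioc (⌈τ n / δ⌉.toNat) M, δ * α ^ (δ * t - τ n) with hS
  -- part1 per-event bounds
  have hIS : ∀ n, 0 ≤ I n - S n ∧ I n - S n ≤ 3 * δ / 2 := by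
    intro n
    have hexp : T - τ n = δ * (M:ℝ) - τ n := by rw [hT]; ring
    have h := part1_event δ α (τ n) M (⌈τ n / δ⌉.toNat) hδ hα0 hα1
      (ht₀1 n) (ht₀M n)
      (by rw [mul_comm]; exact (hceil n).2)
      (by nlinarith [(hceil n).1])
    rw [hI, hS]
    simp only []
    rw [hexp]
    exact h
  -- A1 identity
  have hA1 : ∀ k, (∫ s in (0:ℝ)..T, contRate p N α W μbar kn τ k s)
      = μbar k * T + ∑ n, W k (kn n) * I n := fun k =>
    sumA1 p N T α W μbar kn τ k hα0 hα1 hτ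
  -- B1 identity
  have hB1 : ∀ k, ∑ t ∈ Finset.Icc 1 M, δ * discRate p N δ α W μbar kn τ t k
      = μbar k * T + ∑ n, W k (kn n) * S n := by
    intro k
    rw [sumB1 p N δ α W μbar kn τ M k hδ hτpos]
    congr 1
    rw [hT]
    ring
  -- B2 identity
  have hB2 : ∑ k, ∑ t ∈ Finset.Icc 1 M,
      (eventCount p N δ kn τ t k : ℝ) * Real.log (discRate p N δ α W μbar kn τ t k)
      = ∑ n, Real.log (discRate p N δ α W μbar kn τ (⌈τ n / δ⌉.toNat) (kn n)) :=
    sumB2 p N M δ hδ kn τ hτpos ht₀M _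
  -- part2 per-event bounds
  have hP2 : ∀ n, 0 ≤ Real.log (contRate p N α W μbar kn τ (kn n) (τ n))
        - Real.log (discRate p N δ α W μbar kn τ (⌈τ n / δ⌉.toNat) (kn n)) ∧
      Real.log (contRate p N α W μbar kn τ (kn n) (τ n))
        - Real.log (discRate p N δ α W μbar kn τ (⌈τ n / δ⌉.toNat) (kn n))
      ≤ δ * (-Real.log α) + Wmax * (xmax * δ) * p / μmin := fun n =>
    part2_event p N δ α Wmax μmin xmax hδ hα0 hα1 W hW μbar hμmin hμ kn τ hτpos hrate n
  -- decompose the difference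
  set D1 : ℝ := ∑ k, ∑ n, W k (kn n) * (I n - S n) with hD1def
  set D2 : ℝ := ∑ n, (Real.log (contRate p N α W μbar kn τ (kn n) (τ n))
      - Real.log (discRate p N δ α W μbar kn τ (⌈τ n / δ⌉.toNat) (kn n))) with hD2def
  have hsplit : ∑ k, ∑ t ∈ Finset.Icc 1 M,
        (δ * discRate p N δ α W μbar kn τ t k -
          (eventCount p N δ kn τ t k : ℝ) * Real.log (discRate p N δ α W μbar kn τ t k))
      = (∑ k, ∑ t ∈ Finset.Icc 1 M, δ * discRate p N δ α W μbar kn τ t k)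
        - ∑ k, ∑ t ∈ Finset.Icc 1 M,
            (eventCount p N δ kn τ t k : ℝ) * Real.log (discRate p N δ α W μbar kn τ t k) := by
    rw [← Finset.sum_sub_distrib]
    exact Finset.sum_congr rfl fun k _ => by rw [← Finset.sum_sub_distrib]
  have hmain : ((∑ k, ∫ s in (0:ℝ)..T, contRate p N α W μbar kn τ k s) -
        ∑ n, Real.log (contRate p N α W μbar kn τ (kn n) (τ n))) -
      (∑ k, ∑ t ∈ Finset.Icc 1 M,
        (δ * discRate p N δ α W μbar kn τ t k -
          (eventCount p N δ kn τ t k : ℝ) * Real.log (discRate p N δ α W μbar kn τ t k)))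
      = D1 - D2 := by
    rw [hsplit, hB2]
    have e1 : (∑ k, ∫ s in (0:ℝ)..T, contRate p N α W μbar kn τ k s)
        - (∑ k, ∑ t ∈ Finset.Icc 1 M, δ * discRate p N δ α W μbar kn τ t k) = D1 := by
      simp only [hA1, hB1, hD1def]
      rw [← Finset.sum_sub_distrib]
      refine Finset.sum_congr rfl fun k _ => ?_
      rw [add_sub_add_left_eq_sub, ← Finset.sum_sub_distrib]
      exact Finset.sum_congr rfl fun n _ => by ring
    have e2 : (∑ n, Real.log (contRate p N α W μbar kn τ (kn n) (τ n)))
        - (∑ n, Real.log (discRate p N δ α W μbar kn τ (⌈τ n / δ⌉.toNat) (kn n))) = D2 := by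
      rw [hD2def, ← Finset.sum_sub_distrib]
    rw [← e1, ← e2]
    ring
  rw [hmain]
  -- bounds on D1
  have hD1low : 0 ≤ D1 :=
    Finset.sum_nonneg fun k _ => Finset.sum_nonneg fun n _ =>
      mul_nonneg (hW k (kn n)).1 (hIS n).1
  have hD1high : D1 ≤ (p:ℝ) * N * (Wmax * (3 * δ / 2)) := by
    have h1 : ∀ k : Fin p, ∑ n, W k (kn n) * (I n - S n) ≤ (N:ℝ) * (Wmax * (3 * δ / 2)) := by
      intro k
      calc ∑ n, W k (kn n) * (I n - S n) ≤ ∑ _n : Fin N, Wmax * (3 * δ / 2) :=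
            Finset.sum_le_sum fun n _ =>
              mul_le_mul (hW k (kn n)).2 (hIS n).2 (hIS n).1 hWmax0
        _ = (N:ℝ) * (Wmax * (3 * δ / 2)) := by
            rw [Finset.sum_const]; simp [nsmul_eq_mul]
    calc D1 ≤ ∑ _k : Fin p, (N:ℝ) * (Wmax * (3 * δ / 2)) :=
          Finset.sum_le_sum fun k _ => h1 k
      _ = (p:ℝ) * N * (Wmax * (3 * δ / 2)) := by
          rw [Finset.sum_const]; simp [nsmul_eq_mul]; ring
  -- bounds on D2
  have hD2low : 0 ≤ D2 := Finset.sum_nonneg fun n _ => (hP2 n).1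
  have hD2high : D2 ≤ (N:ℝ) * (δ * (-Real.log α) + Wmax * (xmax * δ) * p / μmin) := by
    calc D2 ≤ ∑ _n : Fin N, (δ * (-Real.log α) + Wmax * (xmax * δ) * p / μmin) :=
          Finset.sum_le_sum fun n _ => (hP2 n).2
      _ = (N:ℝ) * (δ * (-Real.log α) + Wmax * (xmax * δ) * p / μmin) := by
          rw [Finset.sum_const]; simp [nsmul_eq_mul]; ring
  have hC2nn : 0 ≤ (N:ℝ) * (δ * (-Real.log α) + Wmax * (xmax * δ) * p / μmin) := by
    have : 0 ≤ Wmax * (xmax * δ) * p / μmin := by positivity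
    have h2 : 0 ≤ δ * (-Real.log α) := by nlinarith
    positivity
  have hC1nn : 0 ≤ (p:ℝ) * N * (Wmax * (3 * δ / 2)) := by positivity
  have hring : (3 * p * Wmax / 2 + Wmax * xmax * p / μmin - Real.log α) * N * δ
      = (p:ℝ) * N * (Wmax * (3 * δ / 2))
        + (N:ℝ) * (δ * (-Real.log α) + Wmax * (xmax * δ) * p / μmin) := by
    field_simp
    ring
  rw [abs_le]
  constructor
  · linarith
  · linarith
end

section
/- Fix p ≥ 1, a horizon T > 0, a window size δ > 0 with T/δ a positive integer, α ∈ (0, 1), a matrix W ∈ ℝ₊^{p×p} with all entries satisfying 0 ≤ W_{i,j} ≤ Wmax, and a baseline μ̄ ∈ ℝ₊^p. Let (k_n, τ_n), n = 1, …, N_T, be events with k_n ∈ {1, …, p} and 0 < τ_n ≤ T. Then the integral-approximation error satisfies |Σ_{k=1}^p ( ∫_0^T μ_k(τ) dτ − Σ_{t=1}^{T/δ} δ·λ_{t,k} )| ≤ (3/2)·p·N_T·Wmax·δ. -/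
open scoped Classical
open MeasureTheory intervalIntegral Real

private lemma hawkes_exp_cont (c d : ℝ) : Continuous (fun s : ℝ => Real.exp (c * (s - d))) := by
  continuity

private lemma hawkes_exp_ii (c d a b : ℝ) :
    IntervalIntegrable (fun s : ℝ => Real.exp (c * (s - d))) volume a b :=
  (hawkes_exp_cont c d).intervalIntegrable a b

private lemma hawkes_affine_int (A B a b : ℝ) :
    ∫ s in a..b, (A + B * (s - a)) = (b - a) * A + B * (b-a)^2 / 2 := by
  have h1 : IntervalIntegrable (fun _ : ℝ => A) volume a b := intervalIntegrable_const
  have h2 : IntervalIntegrable (fun s : ℝ => B * (s - a)) volume a b := by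
    apply Continuous.intervalIntegrable; continuity
  rw [intervalIntegral.integral_add h1 h2, intervalIntegral.integral_const]
  have : ∫ s in a..b, B * (s - a) = B * ∫ s in a..b, (s - a) := by
    rw [intervalIntegral.integral_const_mul]
  rw [this]
  have h3 : ∫ s in a..b, (s - a) = (b^2 - a^2)/2 - (b - a) * a := by
    have : ∫ s in a..b, (s - a) = (∫ s in a..b, s) - ∫ s in a..b, (a:ℝ) := by
      apply intervalIntegral.integral_sub
      · apply Continuous.intervalIntegrable; continuity
      · exact intervalIntegrable_const
    rw [this, integral_id, intervalIntegral.integral_const]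
    simp only [smul_eq_mul]
  rw [h3]; simp only [smul_eq_mul]; ring

private lemma hawkes_trapezoid (c d a b : ℝ) (hab : a ≤ b) :
    ∫ s in a..b, Real.exp (c * (s - d)) ≤
      (b - a) / 2 * (Real.exp (c * (a - d)) + Real.exp (c * (b - d))) := by
  rcases eq_or_lt_of_le hab with rfl | hab
  · simp
  set ea := Real.exp (c * (a - d))
  set eb := Real.exp (c * (b - d))
  have hba : (0:ℝ) < b - a := by linarith
  have key : ∀ s ∈ Set.uIcc a b, Real.exp (c * (s - d)) ≤ ea + (eb - ea)/(b-a) * (s - a) := by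
    intro s hs
    rw [Set.uIcc_of_le hab.le] at hs
    obtain ⟨h1, h2⟩ := hs
    set t := (b - s)/(b - a) with ht
    have ht0 : 0 ≤ t := div_nonneg (by linarith) hba.le
    have ht1 : 1 - t = (s - a)/(b-a) := by rw [ht]; field_simp; ring
    have ht1' : 0 ≤ 1 - t := by rw [ht1]; exact div_nonneg (by linarith) hba.le
    have hsum : t + (1 - t) = 1 := by ring
    have hs' : c * (s - d) = t * (c * (a - d)) + (1 - t) * (c * (b - d)) := by
      rw [ht]; field_simp [hba.ne']; ring
    have := convexOn_exp.2 (Set.mem_univ (c * (a-d))) (Set.mem_univ (c * (b-d))) ht0 ht1' hsum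
    simp only [smul_eq_mul] at this
    rw [hs']
    calc Real.exp (t * (c * (a - d)) + (1 - t) * (c * (b - d))) ≤ t * ea + (1-t) * eb := this
      _ = ea + (eb - ea)/(b-a) * (s - a) := by rw [ht1, ht]; field_simp [hba.ne']; ring
  calc ∫ s in a..b, Real.exp (c * (s - d))
      ≤ ∫ s in a..b, (ea + (eb - ea)/(b-a) * (s - a)) := by
        apply intervalIntegral.integral_mono_on hab.le (hawkes_exp_ii c d a b)
        · apply Continuous.intervalIntegrable; continuity
        · intro s hs; exact key s (by rw [Set.uIcc_of_le hab.le]; exact hs)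
    _ = (b - a) * ea + (eb - ea)/(b-a) * (b-a)^2 / 2 := hawkes_affine_int _ _ _ _
    _ = (b - a)/2 * (ea + eb) := by field_simp; ring

private lemma hawkes_right_endpoint (c d a b : ℝ) (hab : a ≤ b) (hc : c ≤ 0) :
    (b - a) * Real.exp (c * (b - d)) ≤ ∫ s in a..b, Real.exp (c * (s - d)) := by
  have : ∫ s in a..b, Real.exp (c * (b - d)) ≤ ∫ s in a..b, Real.exp (c * (s - d)) := by
    apply intervalIntegral.integral_mono_on hab intervalIntegrable_const (hawkes_exp_ii c d a b)
    intro s hs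
    apply Real.exp_le_exp.2
    nlinarith [hs.2]
  simpa using this

private lemma hawkes_riemann_bounds (c d δ : ℝ) (hc : c ≤ 0) (hδ : 0 < δ) (m M : ℕ)
    (hmM : m ≤ M) :
    (∑ t ∈ Finset.Icc (m+1) M, δ * Real.exp (c * (δ*t - d)))
        ≤ (∫ s in (δ*m)..(δ*M), Real.exp (c*(s-d)))
    ∧ (∫ s in (δ*m)..(δ*M), Real.exp (c*(s-d)))
        ≤ (∑ t ∈ Finset.Icc (m+1) M, δ * Real.exp (c * (δ*t - d)))
          + δ/2 * (Real.exp (c*(δ*m-d)) - Real.exp (c*(δ*M-d))) := by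
  induction M, hmM using Nat.le_induction with
  | base => simp
  | succ M hmM ih =>
    obtain ⟨ih1, ih2⟩ := ih
    have hsplit : (∫ s in (δ*m)..(δ*(M+1):ℝ), Real.exp (c*(s-d)))
        = (∫ s in (δ*m)..(δ*M), Real.exp (c*(s-d)))
          + ∫ s in (δ*M)..(δ*(M+1):ℝ), Real.exp (c*(s-d)) :=
      (intervalIntegral.integral_add_adjacent_intervals (hawkes_exp_ii c d _ _)
        (hawkes_exp_ii c d _ _)).symm
    have hsum : (∑ t ∈ Finset.Icc (m+1) (M+1), δ * Real.exp (c * (δ*t - d)))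
        = (∑ t ∈ Finset.Icc (m+1) M, δ * Real.exp (c * (δ*t - d)))
          + δ * Real.exp (c * (δ*(M+1) - d)) := by
      rw [Finset.sum_Icc_succ_top (by omega)]
      push_cast
      ring
    have hle : δ*(M:ℝ) ≤ δ*(M+1:ℕ) := by
      push_cast; nlinarith
    have hlo : δ * Real.exp (c * (δ*(M+1:ℕ) - d))
        ≤ ∫ s in (δ*M)..(δ*(M+1):ℝ), Real.exp (c*(s-d)) := by
      have := hawkes_right_endpoint c d (δ*M) (δ*(M+1:ℕ)) hle hc
      have h2 : (δ*(M+1:ℕ) - δ*M : ℝ) = δ := by push_cast; ring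
      rw [h2] at this
      push_cast at this ⊢
      exact this
    have hhi : (∫ s in (δ*M)..(δ*(M+1):ℝ), Real.exp (c*(s-d)))
        ≤ δ/2 * (Real.exp (c*(δ*M-d)) + Real.exp (c*(δ*(M+1:ℕ)-d))) := by
      have := hawkes_trapezoid c d (δ*M) (δ*(M+1:ℕ)) hle
      have h2 : (δ*(M+1:ℕ) - δ*M : ℝ) = δ := by push_cast; ring
      rw [h2] at this
      push_cast at this ⊢
      exact this
    constructor
    · push_cast at hsum hlo ⊢
      rw [hsum, hsplit]
      linarith
    · push_cast at hsum hhi ih2 ⊢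
      rw [hsum, hsplit]
      linarith

private lemma hawkes_event_bound (c d δ : ℝ) (hc : c ≤ 0) (hδ : 0 < δ) (m M : ℕ) (hmM : m ≤ M)
    (h1 : d ≤ δ*m) (h2 : δ*m ≤ d + δ) :
    0 ≤ (∫ s in d..(δ*M), Real.exp (c*(s-d)))
        - (∑ t ∈ Finset.Icc (m+1) M, δ * Real.exp (c * (δ*t - d)))
    ∧ (∫ s in d..(δ*M), Real.exp (c*(s-d)))
        - (∑ t ∈ Finset.Icc (m+1) M, δ * Real.exp (c * (δ*t - d))) ≤ 3/2 * δ := by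
  obtain ⟨hr1, hr2⟩ := hawkes_riemann_bounds c d δ hc hδ m M hmM
  have hsplit : (∫ s in d..(δ*M), Real.exp (c*(s-d)))
      = (∫ s in d..(δ*m), Real.exp (c*(s-d))) + ∫ s in (δ*m)..(δ*M), Real.exp (c*(s-d)) :=
    (intervalIntegral.integral_add_adjacent_intervals (hawkes_exp_ii c d _ _)
      (hawkes_exp_ii c d _ _)).symm
  have hfront0 : 0 ≤ ∫ s in d..(δ*m), Real.exp (c*(s-d)) := by
    apply intervalIntegral.integral_nonneg h1
    intro s _; positivity
  have hfront1 : (∫ s in d..(δ*m), Real.exp (c*(s-d))) ≤ δ*m - d := by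
    have hmono : (∫ s in d..(δ*m), Real.exp (c*(s-d))) ≤ ∫ s in d..(δ*m), (1:ℝ) := by
      apply intervalIntegral.integral_mono_on h1 (hawkes_exp_ii c d _ _) intervalIntegrable_const
      intro s hs
      have : c * (s - d) ≤ 0 := mul_nonpos_of_nonpos_of_nonneg hc (by linarith [hs.1])
      calc Real.exp (c*(s-d)) ≤ Real.exp 0 := Real.exp_le_exp.2 this
        _ = 1 := Real.exp_zero
    simpa using hmono
  have hexp1 : Real.exp (c*(δ*m-d)) ≤ 1 := by
    calc Real.exp (c*(δ*m-d)) ≤ Real.exp 0 :=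
          Real.exp_le_exp.2 (mul_nonpos_of_nonpos_of_nonneg hc (by linarith))
      _ = 1 := Real.exp_zero
  have hexp2 : 0 < Real.exp (c*(δ*M-d)) := Real.exp_pos _
  constructor
  · rw [hsplit]; linarith
  · have h3 : δ/2 * (Real.exp (c*(δ*m-d)) - Real.exp (c*(δ*M-d))) ≤ δ/2 * 1 :=
      mul_le_mul_of_nonneg_left (by linarith) (by linarith)
    rw [hsplit]; linarith

/-- Integral-approximation bound in the proof of Lemma 1:
`|Σ_k (∫₀ᵀ μ_k(τ)dτ − Σ_{t=1}^{T/δ} δ·λ_{t,k})| ≤ (3/2)·p·N_T·Wmax·δ`. -/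
theorem stmt_15 (p : ℕ) (hp : 1 ≤ p) (T δ α Wmax : ℝ) (M : ℕ)
    (hδ : 0 < δ) (hM : 0 < M) (hT : T = M * δ)
    (hα : α ∈ Set.Ioo (0 : ℝ) 1)
    (W : Matrix (Fin p) (Fin p) ℝ) (hW : ∀ i j, 0 ≤ W i j ∧ W i j ≤ Wmax)
    (μbar : Fin p → ℝ) (hμ : ∀ k, 0 ≤ μbar k)
    (N : ℕ) (kn : Fin N → Fin p) (τ : Fin N → ℝ)
    (hτ : ∀ n, 0 < τ n ∧ τ n ≤ T) :
    |∑ k, ((∫ s in (0:ℝ)..T, contRate p N α W μbar kn τ k s) -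
        ∑ t ∈ Finset.Icc 1 M, δ * discRate p N δ α W μbar kn τ t k)|
      ≤ 3 / 2 * p * N * Wmax * δ := by
  obtain ⟨hα0, hα1⟩ := hα
  set c := Real.log α with hcdef
  have hc : c < 0 := Real.log_neg hα0 hα1
  have hrpow : ∀ x : ℝ, α ^ x = Real.exp (c * x) := fun x => by
    rw [Real.rpow_def_of_pos hα0]
  set mf : Fin N → ℕ := fun n => (⌈τ n / δ⌉).toNat with hmfdef
  have hceil_pos : ∀ n, 0 < ⌈τ n / δ⌉ := fun n => Int.ceil_pos.2 (div_pos (hτ n).1 hδ)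
  have hmf_cast : ∀ n, ((mf n : ℕ) : ℝ) = ((⌈τ n / δ⌉ : ℤ) : ℝ) := fun n => by
    simp only [hmfdef]
    exact_mod_cast congrArg (Int.cast : ℤ → ℝ) (Int.toNat_of_nonneg (hceil_pos n).le)
  have hmf1 : ∀ n, 1 ≤ mf n := fun n => by
    have h := hceil_pos n
    simp only [hmfdef]
    omega
  have hTδM : T = δ * M := by rw [hT]; ring
  have hd1 : ∀ n, τ n ≤ δ * mf n := fun n => by
    have h := Int.le_ceil (τ n / δ)
    have : τ n / δ ≤ ((mf n : ℕ) : ℝ) := by rw [hmf_cast n]; exact_mod_cast h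
    calc τ n = (τ n / δ) * δ := by field_simp
      _ ≤ ((mf n : ℕ) : ℝ) * δ := mul_le_mul_of_nonneg_right this hδ.le
      _ = δ * mf n := by ring
  have hd2 : ∀ n, δ * mf n ≤ τ n + δ := fun n => by
    have h := Int.ceil_lt_add_one (τ n / δ)
    have h' : ((mf n : ℕ) : ℝ) ≤ τ n / δ + 1 := by
      rw [hmf_cast n]; exact_mod_cast h.le
    calc δ * mf n = ((mf n : ℕ) : ℝ) * δ := by ring
      _ ≤ (τ n / δ + 1) * δ := mul_le_mul_of_nonneg_right h' hδ.le
      _ = τ n + δ := by field_simp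
  have hmM : ∀ n, mf n ≤ M := fun n => by
    have h : ⌈τ n / δ⌉ ≤ (M : ℤ) := by
      apply Int.ceil_le.2
      push_cast
      rw [div_le_iff₀ hδ]
      calc τ n ≤ T := (hτ n).2
        _ = (M:ℝ) * δ := hT
    simp only [hmfdef]
    omega
  -- filter over time steps
  have hfil : ∀ n, (Finset.Icc 1 M).filter (fun t : ℕ => (⌈τ n / δ⌉ : ℝ) * δ < δ * (t:ℝ))
      = Finset.Icc (mf n + 1) M := by
    intro n
    ext t
    simp only [Finset.mem_filter, Finset.mem_Icc]
    have hcond : ((⌈τ n / δ⌉ : ℝ) * δ < δ * (t:ℝ)) ↔ (mf n + 1 ≤ t) := by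
      rw [← hmf_cast n]
      constructor
      · intro h
        have h1 : ((mf n : ℕ) : ℝ) < (t:ℝ) := by nlinarith
        have h2 : mf n < t := by exact_mod_cast h1
        omega
      · intro h
        have h1 : mf n < t := by omega
        have h2 : ((mf n : ℕ) : ℝ) < (t:ℝ) := by exact_mod_cast h1
        nlinarith
    constructor
    · rintro ⟨⟨_, ht2⟩, hcnd⟩
      exact ⟨hcond.1 hcnd, ht2⟩
    · rintro ⟨ht1, ht2⟩
      have := hmf1 n
      exact ⟨⟨by omega, ht2⟩, hcond.2 ht1⟩
  -- abbreviations
  set Sn : Fin N → ℝ := fun n => ∑ t ∈ Finset.Icc (mf n + 1) M, δ * Real.exp (c * (δ*t - τ n))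
    with hSndef
  set In : Fin N → ℝ := fun n => ∫ s in (τ n)..(δ*(M:ℝ)), Real.exp (c*(s - τ n)) with hIndef
  -- discrete side
  have hdisc : ∀ k : Fin p,
      (∑ t ∈ Finset.Icc 1 M, δ * discRate p N δ α W μbar kn τ t k)
        = μbar k * (δ * M) + ∑ n, W k (kn n) * Sn n := by
    intro k
    unfold discRate
    simp only [mul_add, Finset.sum_add_distrib]
    congr 1
    · rw [Finset.sum_const, Nat.card_Icc]
      simp only [Nat.add_sub_cancel, nsmul_eq_mul]
      ring
    · have hstep : ∀ t ∈ Finset.Icc 1 M,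
          δ * (∑ n ∈ Finset.univ.filter (fun n => (⌈τ n / δ⌉ : ℝ) * δ < δ * t),
            W k (kn n) * α ^ (δ * t - τ n))
          = ∑ n : Fin N, (if (⌈τ n / δ⌉ : ℝ) * δ < δ * t
              then W k (kn n) * (δ * Real.exp (c * (δ*t - τ n))) else 0) := by
        intro t _
        rw [Finset.mul_sum, Finset.sum_filter]
        apply Finset.sum_congr rfl
        intro n _
        split
        · rw [hrpow]; ring
        · rfl
      rw [Finset.sum_congr rfl hstep, Finset.sum_comm]
      apply Finset.sum_congr rfl
      intro n _
      rw [← Finset.sum_filter, hfil n]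
      simp only [hSndef]
      rw [Finset.mul_sum]
  -- continuous side
  have hcont : ∀ k : Fin p,
      (∫ s in (0:ℝ)..T, contRate p N α W μbar kn τ k s)
        = μbar k * (δ * M) + ∑ n, W k (kn n) * In n := by
    intro k
    set g : Fin N → ℝ → ℝ := fun n s =>
      if τ n < s then W k (kn n) * Real.exp (c * (s - τ n)) else 0 with hgdef
    have hgint : ∀ n (a b : ℝ), IntervalIntegrable (g n) volume a b := by
      intro n a b
      rw [intervalIntegrable_iff]
      have hge : g n = (Set.Ioi (τ n)).indicator
          (fun s => W k (kn n) * Real.exp (c * (s - τ n))) := by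
        funext s
        simp [hgdef, Set.indicator, Set.mem_Ioi]
      rw [hge]
      have hcont' : Continuous (fun s : ℝ => W k (kn n) * Real.exp (c * (s - τ n))) := by
        continuity
      exact (intervalIntegrable_iff.mp (hcont'.intervalIntegrable a b)).indicator
        measurableSet_Ioi
    have hfun : ∀ s : ℝ, contRate p N α W μbar kn τ k s = μbar k + ∑ n, g n s := by
      intro s
      unfold contRate
      rw [Finset.sum_filter]
      congr 1
      apply Finset.sum_congr rfl
      intro n _
      simp only [hgdef]
      split
      · rw [hrpow]
      · rfl
    simp only [hfun]
    have hsint : IntervalIntegrable (fun s => ∑ n : Fin N, g n s) volume 0 T := by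
      have h := IntervalIntegrable.sum (μ := volume) (a := (0:ℝ)) (b := T) Finset.univ
        (f := g) (fun n _ => hgint n 0 T)
      have heq : (fun s => ∑ n : Fin N, g n s) = ∑ i : Fin N, g i := by
        funext s; simp [Finset.sum_apply]
      rw [heq]
      exact h
    rw [intervalIntegral.integral_add intervalIntegrable_const hsint,
      intervalIntegral.integral_const,
      intervalIntegral.integral_finset_sum (fun n _ => hgint n 0 T)]
    have hg_eval : ∀ n : Fin N, (∫ s in (0:ℝ)..T, g n s) = W k (kn n) * In n := by
      intro n
      obtain ⟨hτ0, hτT⟩ := hτ n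
      have hsplit : (∫ s in (0:ℝ)..T, g n s)
          = (∫ s in (0:ℝ)..(τ n), g n s) + ∫ s in (τ n)..T, g n s :=
        (intervalIntegral.integral_add_adjacent_intervals (hgint n 0 (τ n))
          (hgint n (τ n) T)).symm
      have hz : (∫ s in (0:ℝ)..(τ n), g n s) = 0 := by
        rw [intervalIntegral.integral_congr (g := fun _ => (0:ℝ))]
        · simp
        · intro s hs
          rw [Set.uIcc_of_le hτ0.le] at hs
          simp [hgdef, not_lt.2 hs.2]
      have he : (∫ s in (τ n)..T, g n s)
          = ∫ s in (τ n)..T, W k (kn n) * Real.exp (c * (s - τ n)) := by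
        apply intervalIntegral.integral_congr_ae
        apply Filter.Eventually.of_forall
        intro s hs
        rw [Set.uIoc_of_le hτT] at hs
        simp [hgdef, hs.1]
      rw [hsplit, hz, he, zero_add, intervalIntegral.integral_const_mul, hIndef]
      have hTe : T = δ * (M:ℝ) := hTδM
      rw [hTe]
    rw [Finset.sum_congr rfl (fun n _ => hg_eval n)]
    simp only [smul_eq_mul, sub_zero]
    rw [hTδM]
    ring
  -- combine
  have hmain : (∑ k, ((∫ s in (0:ℝ)..T, contRate p N α W μbar kn τ k s) -
        ∑ t ∈ Finset.Icc 1 M, δ * discRate p N δ α W μbar kn τ t k))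
      = ∑ k : Fin p, ∑ n : Fin N, W k (kn n) * (In n - Sn n) := by
    apply Finset.sum_congr rfl
    intro k _
    rw [hcont k, hdisc k]
    have hsub : (∑ n : Fin N, W k (kn n) * (In n - Sn n))
        = (∑ n : Fin N, W k (kn n) * In n) - ∑ n : Fin N, W k (kn n) * Sn n := by
      rw [← Finset.sum_sub_distrib]
      exact Finset.sum_congr rfl fun n _ => by ring
    rw [hsub]
    ring
  have hWmax0 : 0 ≤ Wmax := by
    have h := hW ⟨0, hp⟩ ⟨0, hp⟩
    linarith [h.1, h.2]
  have hE : ∀ n : Fin N, 0 ≤ In n - Sn n ∧ In n - Sn n ≤ 3/2 * δ := by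
    intro n
    exact hawkes_event_bound c (τ n) δ hc.le hδ (mf n) M (hmM n) (hd1 n) (hd2 n)
  rw [hmain]
  calc |∑ k : Fin p, ∑ n : Fin N, W k (kn n) * (In n - Sn n)|
      ≤ ∑ k : Fin p, |∑ n : Fin N, W k (kn n) * (In n - Sn n)| :=
        Finset.abs_sum_le_sum_abs _ _
    _ ≤ ∑ k : Fin p, ∑ n : Fin N, |W k (kn n) * (In n - Sn n)| :=
        Finset.sum_le_sum (fun k _ => Finset.abs_sum_le_sum_abs _ _)
    _ ≤ ∑ _k : Fin p, ∑ _n : Fin N, Wmax * (3/2 * δ) := by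
        apply Finset.sum_le_sum
        intro k _
        apply Finset.sum_le_sum
        intro n _
        obtain ⟨hE0, hE1⟩ := hE n
        obtain ⟨hW0, hW1⟩ := hW k (kn n)
        rw [abs_of_nonneg (mul_nonneg hW0 hE0)]
        exact mul_le_mul hW1 hE1 hE0 hWmax0
    _ = 3 / 2 * p * N * Wmax * δ := by
        simp [Finset.sum_const, Finset.card_univ]
        ring
end

section
/- Fix p ≥ 1, a horizon T > 0, a window size δ > 0 with T/δ a positive integer, α ∈ (0, 1), a matrix W ∈ ℝ₊^{p×p} with all entries satisfying 0 ≤ W_{i,j} ≤ Wmax, and a baseline μ̄ with μ̄_k ≥ μmin > 0 for all k. Let (k_n, τ_n), n = 1, …, N_T, be events with k_n ∈ {1, …, p} and 0 < τ_n ≤ T, and suppose each actor has at most xmax·δ events in any interval of length δ. Then −N_T·(Wmax·xmax·p/μmin − log α)·δ ≤ Σ_{n=1}^{N_T} log( λ_{τ̄_n/δ, k_n} / μ_{k_n}(τ_n) ) ≤ 0. -/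
open scoped Classical

set_option maxHeartbeats 1000000 in
/-- Log-term bound in the proof of Lemma 1:
`−N_T·(Wmax·xmax·p/μmin − log α)·δ ≤ Σ_n log(λ_{τ̄_n/δ, k_n}/μ_{k_n}(τ_n)) ≤ 0`. -/
theorem stmt_16 (p : ℕ) (hp : 1 ≤ p) (T δ α Wmax μmin xmax : ℝ) (M : ℕ)
    (hδ : 0 < δ) (hM : 0 < M) (hT : T = M * δ)
    (hα : α ∈ Set.Ioo (0 : ℝ) 1)
    (W : Matrix (Fin p) (Fin p) ℝ) (hW : ∀ i j, 0 ≤ W i j ∧ W i j ≤ Wmax)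
    (μbar : Fin p → ℝ) (hμmin : 0 < μmin) (hμ : ∀ k, μmin ≤ μbar k)
    (N : ℕ) (kn : Fin N → Fin p) (τ : Fin N → ℝ)
    (hτ : ∀ n, 0 < τ n ∧ τ n ≤ T)
    (hrate : ∀ (k : Fin p) (a : ℝ),
      ((Finset.univ.filter (fun n => kn n = k ∧ a < τ n ∧ τ n ≤ a + δ)).card : ℝ)
        ≤ xmax * δ) :
    -(N * (Wmax * xmax * p / μmin - Real.log α) * δ) ≤
      (∑ n, Real.log (discRate p N δ α W μbar kn τ (⌈τ n / δ⌉.toNat) (kn n) /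
        contRate p N α W μbar kn τ (kn n) (τ n))) ∧
    (∑ n, Real.log (discRate p N δ α W μbar kn τ (⌈τ n / δ⌉.toNat) (kn n) /
        contRate p N α W μbar kn τ (kn n) (τ n))) ≤ 0 := by
  obtain ⟨hα0, hα1⟩ := hα
  have hWmax : 0 ≤ Wmax := le_trans (hW ⟨0, hp⟩ ⟨0, hp⟩).1 (hW ⟨0, hp⟩ ⟨0, hp⟩).2
  set C := Wmax * xmax * p / μmin - Real.log α with hC
  have key : ∀ n : Fin N,
      -(C * δ) ≤ Real.log (discRate p N δ α W μbar kn τ (⌈τ n / δ⌉.toNat) (kn n) /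
        contRate p N α W μbar kn τ (kn n) (τ n)) ∧
      Real.log (discRate p N δ α W μbar kn τ (⌈τ n / δ⌉.toNat) (kn n) /
        contRate p N α W μbar kn τ (kn n) (τ n)) ≤ 0 := by
    intro n
    set t : ℕ := (⌈τ n / δ⌉).toNat with htdef
    have hτn0 := (hτ n).1
    have hceil_pos : (0:ℤ) < ⌈τ n / δ⌉ := Int.ceil_pos.2 (div_pos hτn0 hδ)
    have htcast : ((t : ℕ) : ℝ) = ((⌈τ n / δ⌉ : ℤ) : ℝ) := by
      rw [htdef]; exact_mod_cast congrArg (Int.cast : ℤ → ℝ) (Int.toNat_of_nonneg hceil_pos.le)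
    have hτle : τ n ≤ δ * t := by
      have h1 : τ n / δ ≤ ((⌈τ n / δ⌉ : ℤ) : ℝ) := Int.le_ceil _
      rw [div_le_iff₀ hδ] at h1
      rw [htcast]; linarith
    have hτgt : δ * t - δ < τ n := by
      have h2 : ((⌈τ n / δ⌉ : ℤ) : ℝ) < τ n / δ + 1 := Int.ceil_lt_add_one _
      have h3 : (τ n / δ) * δ = τ n := div_mul_cancel₀ _ hδ.ne'
      rw [htcast]; nlinarith
    set A : Finset (Fin N) :=
      Finset.univ.filter (fun m => (⌈τ m / δ⌉ : ℝ) * δ < δ * (t:ℕ)) with hAdef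
    set B : Finset (Fin N) := Finset.univ.filter (fun m => τ m < τ n) with hBdef
    have hAB : A ⊆ B := by
      intro m hm
      rw [hAdef, Finset.mem_filter] at hm
      rw [hBdef, Finset.mem_filter]
      refine ⟨Finset.mem_univ _, ?_⟩
      have hm' := hm.2
      have hmle : τ m ≤ ((⌈τ m / δ⌉ : ℤ) : ℝ) * δ := by
        have h1 : τ m / δ ≤ ((⌈τ m / δ⌉ : ℤ) : ℝ) := Int.le_ceil _
        rw [div_le_iff₀ hδ] at h1; linarith
      have hlt : (⌈τ m / δ⌉ : ℤ) < ⌈τ n / δ⌉ := by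
        have hr : ((⌈τ m / δ⌉ : ℤ) : ℝ) < ((⌈τ n / δ⌉ : ℤ) : ℝ) := by
          rw [← htcast]
          nlinarith
        exact_mod_cast hr
      have hle1 : ((⌈τ m / δ⌉ : ℤ) : ℝ) ≤ ((⌈τ n / δ⌉ : ℤ) : ℝ) - 1 := by
        have h : (⌈τ m / δ⌉ : ℤ) ≤ ⌈τ n / δ⌉ - 1 := by omega
        have h' : ((⌈τ m / δ⌉ : ℤ) : ℝ) ≤ ((⌈τ n / δ⌉ - 1 : ℤ) : ℝ) := by exact_mod_cast h
        push_cast at h'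
        linarith
      have hgt : ((⌈τ n / δ⌉ : ℤ) : ℝ) * δ - δ < τ n := by
        rw [← htcast]; linarith
      nlinarith
    set ε : ℝ := δ * t - τ n with hεdef
    have hε0 : 0 ≤ ε := by rw [hεdef]; linarith
    have hεδ : ε ≤ δ := by rw [hεdef]; linarith
    set S : ℝ := ∑ m ∈ A, W (kn n) (kn m) * α ^ (τ n - τ m) with hSdef
    have hS0 : 0 ≤ S := Finset.sum_nonneg fun m _ =>
      mul_nonneg (hW _ _).1 (Real.rpow_nonneg hα0.le _)
    set R : ℝ := ∑ m ∈ B \ A, W (kn n) (kn m) * α ^ (τ n - τ m) with hRdef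
    have hR0 : 0 ≤ R := Finset.sum_nonneg fun m _ =>
      mul_nonneg (hW _ _).1 (Real.rpow_nonneg hα0.le _)
    have hdisc : discRate p N δ α W μbar kn τ t (kn n) = μbar (kn n) + α ^ ε * S := by
      rw [discRate, hSdef, hεdef, Finset.mul_sum]
      congr 1
      refine Finset.sum_congr ?_ fun m hm => ?_
      · rw [hAdef]
      · rw [show δ * (t:ℝ) - τ m = (δ * (t:ℝ) - τ n) + (τ n - τ m) by ring,
          Real.rpow_add hα0]
        ring
    have hcont : contRate p N α W μbar kn τ (kn n) (τ n) = μbar (kn n) + (S + R) := by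
      have h := Finset.sum_sdiff (f := fun m => W (kn n) (kn m) * α ^ (τ n - τ m)) hAB
      rw [hBdef] at h
      rw [contRate, hSdef, hRdef]
      linarith
    have hμS : μmin ≤ μbar (kn n) + S := by have := hμ (kn n); linarith
    have hαε1 : α ^ ε ≤ 1 := Real.rpow_le_one hα0.le hα1.le hε0
    have hαεpos : 0 < α ^ ε := Real.rpow_pos_of_pos hα0 _
    have hεS : α ^ ε * S ≤ S := mul_le_of_le_one_left hS0 hαε1
    have hεS0 : 0 ≤ α ^ ε * S := mul_nonneg hαεpos.le hS0
    have hdiscpos : 0 < discRate p N δ α W μbar kn τ t (kn n) := by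
      rw [hdisc]; linarith [hμ (kn n)]
    have hcontpos : 0 < contRate p N α W μbar kn τ (kn n) (τ n) := by
      rw [hcont]; linarith [hμ (kn n)]
    have hdlec : discRate p N δ α W μbar kn τ t (kn n)
        ≤ contRate p N α W μbar kn τ (kn n) (τ n) := by
      rw [hdisc, hcont]; linarith
    have hRle : R ≤ Wmax * (p * (xmax * δ)) := by
      have hterm : ∀ m ∈ B \ A, W (kn n) (kn m) * α ^ (τ n - τ m) ≤ Wmax := by
        intro m hm
        have hmB := (Finset.mem_sdiff.1 hm).1
        rw [hBdef, Finset.mem_filter] at hmB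
        have h1 : α ^ (τ n - τ m) ≤ 1 :=
          Real.rpow_le_one hα0.le hα1.le (by linarith [hmB.2])
        calc W (kn n) (kn m) * α ^ (τ n - τ m)
            ≤ W (kn n) (kn m) * 1 := mul_le_mul_of_nonneg_left h1 (hW _ _).1
          _ = W (kn n) (kn m) := mul_one _
          _ ≤ Wmax := (hW _ _).2
      have hcard : ((B \ A).card : ℝ) ≤ p * (xmax * δ) := by
        set Cs : Finset (Fin N) :=
          Finset.univ.filter (fun m => δ * t - δ < τ m ∧ τ m ≤ δ * t) with hCsdef
        have hsub : B \ A ⊆ Cs := by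
          intro m hm
          rw [Finset.mem_sdiff, hBdef, hAdef, Finset.mem_filter, Finset.mem_filter] at hm
          rw [hCsdef, Finset.mem_filter]
          refine ⟨Finset.mem_univ _, ?_, ?_⟩
          · have hnot : ¬ ((⌈τ m / δ⌉ : ℝ) * δ < δ * (t:ℕ)) := fun h =>
              hm.2 ⟨Finset.mem_univ _, h⟩
            push_neg at hnot
            have h2 : ((⌈τ m / δ⌉ : ℤ) : ℝ) < τ m / δ + 1 := Int.ceil_lt_add_one _
            have h3 : (τ m / δ) * δ = τ m := div_mul_cancel₀ _ hδ.ne'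
            nlinarith
          · linarith [hm.1.2]
        have hcard2 : Cs.card = ∑ k : Fin p, (Cs.filter (fun m => kn m = k)).card :=
          Finset.card_eq_sum_card_fiberwise (fun m _ => Finset.mem_univ (kn m))
        have hfib : ∀ k : Fin p, ((Cs.filter (fun m => kn m = k)).card : ℝ) ≤ xmax * δ := by
          intro k
          refine le_trans ?_ (hrate k (δ * t - δ))
          have hss : Cs.filter (fun m => kn m = k) ⊆
              Finset.univ.filter
                (fun m => kn m = k ∧ δ * (t:ℕ) - δ < τ m ∧ τ m ≤ (δ * (t:ℕ) - δ) + δ) := by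
            intro m hm
            rw [Finset.mem_filter, hCsdef, Finset.mem_filter] at hm
            rw [Finset.mem_filter]
            exact ⟨Finset.mem_univ _, hm.2, hm.1.2.1, by linarith [hm.1.2.2]⟩
          exact_mod_cast Nat.cast_le.2 (Finset.card_le_card hss)
        calc ((B \ A).card : ℝ) ≤ (Cs.card : ℝ) := Nat.cast_le.2 (Finset.card_le_card hsub)
          _ = ∑ k : Fin p, ((Cs.filter (fun m => kn m = k)).card : ℝ) := by
              rw [hcard2]; push_cast; rfl
          _ ≤ ∑ _k : Fin p, (xmax * δ) := Finset.sum_le_sum fun k _ => hfib k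
          _ = p * (xmax * δ) := by rw [Finset.sum_const]; simp [nsmul_eq_mul]
      calc R ≤ ∑ _m ∈ B \ A, Wmax := Finset.sum_le_sum hterm
        _ = ((B \ A).card : ℝ) * Wmax := by rw [Finset.sum_const]; simp [nsmul_eq_mul]
        _ ≤ (p * (xmax * δ)) * Wmax := mul_le_mul_of_nonneg_right hcard hWmax
        _ = Wmax * (p * (xmax * δ)) := by ring
    constructor
    · -- lower bound
      rw [Real.log_div hdiscpos.ne' hcontpos.ne']
      have hx : (0:ℝ) < μbar (kn n) + S := by linarith
      have hlogd : δ * Real.log α + Real.log (μbar (kn n) + S)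
          ≤ Real.log (discRate p N δ α W μbar kn τ t (kn n)) := by
        have h2 : α ^ δ ≤ α ^ ε := Real.rpow_le_rpow_of_exponent_ge hα0 hα1.le hεδ
        have h2' : α ^ δ * (μbar (kn n) + S) ≤ α ^ ε * (μbar (kn n) + S) :=
          mul_le_mul_of_nonneg_right h2 hx.le
        have h2'' : α ^ ε * μbar (kn n) ≤ μbar (kn n) :=
          mul_le_of_le_one_left (by linarith [hμ (kn n)]) hαε1
        have h1 : α ^ δ * (μbar (kn n) + S) ≤ discRate p N δ α W μbar kn τ t (kn n) := by
          rw [hdisc]; nlinarith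
        calc δ * Real.log α + Real.log (μbar (kn n) + S)
            = Real.log (α ^ δ * (μbar (kn n) + S)) := by
              rw [Real.log_mul (Real.rpow_pos_of_pos hα0 δ).ne' hx.ne', Real.log_rpow hα0]
          _ ≤ _ := Real.log_le_log (by positivity) h1
      have hlogc : Real.log (contRate p N α W μbar kn τ (kn n) (τ n))
          ≤ Real.log (μbar (kn n) + S) + R / μmin := by
        have h1 : Real.log (contRate p N α W μbar kn τ (kn n) (τ n))
            - Real.log (μbar (kn n) + S)
            = Real.log ((μbar (kn n) + (S + R)) / (μbar (kn n) + S)) := by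
          rw [hcont, Real.log_div (by linarith) hx.ne']
        have h2 : Real.log ((μbar (kn n) + (S + R)) / (μbar (kn n) + S))
            ≤ (μbar (kn n) + (S + R)) / (μbar (kn n) + S) - 1 :=
          Real.log_le_sub_one_of_pos (div_pos (by linarith) hx)
        have h3 : (μbar (kn n) + (S + R)) / (μbar (kn n) + S) - 1
            = R / (μbar (kn n) + S) := by
          field_simp; ring
        have h4 : R / (μbar (kn n) + S) ≤ R / μmin :=
          div_le_div_of_nonneg_left hR0 hμmin hμS
        linarith
      have h5 : R / μmin ≤ Wmax * (p * (xmax * δ)) / μmin :=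
        div_le_div_of_nonneg_right hRle hμmin.le
      rw [hC]
      have h6 : Wmax * (p * (xmax * δ)) / μmin = Wmax * xmax * p / μmin * δ := by
        field_simp
      linarith
    · -- upper bound
      apply Real.log_nonpos (div_nonneg hdiscpos.le hcontpos.le)
      rw [div_le_one hcontpos]
      exact hdlec
  constructor
  · refine le_trans (le_of_eq ?_) (Finset.sum_le_sum fun n _ => (key n).1)
    rw [Finset.sum_const, Finset.card_univ, Fintype.card_fin, nsmul_eq_mul]
    ring
  · exact Finset.sum_nonpos fun n _ => (key n).2
end

section
/- For every α ∈ (0, 1), every δ > 0, every u ≥ 0, and every s ∈ [0, δ], the quantity E = α^u·( δ·α^δ/(1 − α^δ) + 1/log α ) − 1/log α − α^s·δ·α^δ/(1 − α^δ) satisfies −δ/2 ≤ E ≤ 3δ/2. -/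
lemma aux_exp_one_sub (y : ℝ) : Real.exp y * (1 - y) ≤ 1 := by
  have h := Real.add_one_le_exp (-y)
  have hp := Real.exp_pos y
  have hmul : Real.exp y * Real.exp (-y) = 1 := by
    rw [← Real.exp_add]; simp
  nlinarith

lemma aux_exp_tanh (x : ℝ) (hx : 0 ≤ x) : Real.exp x * (2 - x) ≤ x + 2 := by
  set f : ℝ → ℝ := fun t => t + 2 - Real.exp t * (2 - t) with hf
  have hderiv : ∀ t : ℝ, HasDerivAt f (1 - Real.exp t * (1 - t)) t := by
    intro t
    have h1 : HasDerivAt (fun t : ℝ => Real.exp t * (2 - t))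
        (Real.exp t * (2 - t) + Real.exp t * (-1)) t := by
      have := (Real.hasDerivAt_exp t).mul ((hasDerivAt_id t).const_sub 2)
      exact this
    have h2 : HasDerivAt (fun t : ℝ => t + 2) 1 t := (hasDerivAt_id t).add_const 2
    have h3 := h2.sub h1
    refine h3.congr_deriv ?_
    ring
  have hmono : MonotoneOn f (Set.Ici (0:ℝ)) := by
    apply monotoneOn_of_deriv_nonneg (convex_Ici 0)
    · exact Continuous.continuousOn (by fun_prop)
    · intro t _
      exact (hderiv t).differentiableAt.differentiableWithinAt
    · intro t _
      rw [(hderiv t).deriv]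
      have := aux_exp_one_sub t
      linarith
  have h0 : f 0 ≤ f x := hmono (Set.self_mem_Ici) (Set.mem_Ici.mpr hx) hx
  have hf0 : f 0 = 0 := by simp [hf, Real.exp_zero]
  have : (0:ℝ) ≤ f x := by rw [← hf0]; exact h0
  simp only [hf] at this
  linarith

/-- Per-event discretization error bound in the proof of Lemma 1: for `α ∈ (0,1)`,
`δ > 0`, `u ≥ 0`, `s ∈ [0, δ]`,
`−δ/2 ≤ α^u·(δα^δ/(1−α^δ) + 1/log α) − 1/log α − α^s·δα^δ/(1−α^δ) ≤ 3δ/2`. -/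
theorem stmt_17 (α δ u s : ℝ) (hα : α ∈ Set.Ioo (0 : ℝ) 1) (hδ : 0 < δ)
    (hu : 0 ≤ u) (hs : s ∈ Set.Icc 0 δ) :
    -δ / 2 ≤ α ^ u * (δ * α ^ δ / (1 - α ^ δ) + 1 / Real.log α) - 1 / Real.log α -
        α ^ s * (δ * α ^ δ / (1 - α ^ δ)) ∧
      α ^ u * (δ * α ^ δ / (1 - α ^ δ) + 1 / Real.log α) - 1 / Real.log α -
        α ^ s * (δ * α ^ δ / (1 - α ^ δ)) ≤ 3 * δ / 2 := by
  obtain ⟨hα0, hα1⟩ := hα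
  obtain ⟨hs0, hsδ⟩ := hs
  have hL : Real.log α < 0 := Real.log_neg hα0 hα1
  set L := Real.log α with hLdef
  set β := α ^ δ with hβdef
  have hβ0 : 0 < β := Real.rpow_pos_of_pos hα0 δ
  have hβ1 : β < 1 := Real.rpow_lt_one hα0.le hα1 hδ
  have h1β : 0 < 1 - β := by linarith
  set x := -(L * δ) with hxdef
  have hx : 0 < x := by
    have : L * δ < 0 := mul_neg_of_neg_of_pos hL hδ
    linarith
  have hβexp : β = Real.exp (-x) := by
    rw [hβdef, Real.rpow_def_of_pos hα0]
    simp [hxdef, hLdef]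
  have hexpx : Real.exp x * β = 1 := by
    rw [hβexp, ← Real.exp_add]; simp
  -- (a): δ * (-L) * β ≤ 1 - β
  have ha : δ * (-L) * β ≤ 1 - β := by
    have h1 := Real.add_one_le_exp x
    have hep := Real.exp_pos x
    have hxb : δ * (-L) = x := by rw [hxdef]; ring
    rw [hxb]
    nlinarith [hexpx, hβ0]
  -- (b): 1 - β ≤ (x/2) * (1 - β) + x * β
  have hb : 1 - β ≤ (x / 2) * (1 - β) + x * β := by
    have h1 := aux_exp_tanh x hx.le
    nlinarith [hexpx, hβ0]
  set C := δ * β / (1 - β) with hCdef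
  have hC0 : 0 ≤ C := by positivity
  have hCβ : C * (1 - β) = δ * β := by
    rw [hCdef, div_mul_cancel₀ _ h1β.ne']
  set D := -(1 / L) - C with hDdef
  have hnL : 0 < -L := by linarith
  have hD0 : 0 ≤ D := by
    rw [hDdef, hCdef, sub_nonneg, ← div_neg, div_le_div_iff₀ h1β hnL]
    nlinarith [ha]
  have hD2 : D ≤ δ / 2 := by
    have hkey : (δ / 2 + C) * (-L) * (1 - β) = (x / 2) * (1 - β) + x * β := by
      rw [hCdef, hxdef]
      field_simp
      ring
    have h1 : 1 - β ≤ (δ / 2 + C) * (-L) * (1 - β) := by rw [hkey]; exact hb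
    have h2 : 1 ≤ (δ / 2 + C) * (-L) := by nlinarith
    have h3 : -(1 / L) ≤ δ / 2 + C := by
      rw [← div_neg, div_le_iff₀ hnL]
      linarith
    rw [hDdef]
    linarith
  have hαu1 : α ^ u ≤ 1 := Real.rpow_le_one hα0.le hα1.le hu
  have hαu0 : 0 < α ^ u := Real.rpow_pos_of_pos hα0 u
  have hαs1 : α ^ s ≤ 1 := Real.rpow_le_one hα0.le hα1.le hs0
  have hβs : β ≤ α ^ s := Real.rpow_le_rpow_of_exponent_ge hα0 hα1.le hsδ
  have hE : α ^ u * (δ * β / (1 - β) + 1 / L) - 1 / L - α ^ s * (δ * β / (1 - β))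
      = D * (1 - α ^ u) + C * (1 - α ^ s) := by
    rw [hDdef, hCdef]; ring
  rw [hE]
  have hDu0 : 0 ≤ D * (1 - α ^ u) := mul_nonneg hD0 (by linarith)
  have hDu : D * (1 - α ^ u) ≤ δ / 2 := by nlinarith
  have hCs0 : 0 ≤ C * (1 - α ^ s) := mul_nonneg hC0 (by linarith)
  have hCs : C * (1 - α ^ s) ≤ δ * β := by nlinarith [mul_nonneg hC0 (sub_nonneg.mpr hβs)]
  have hδβ : δ * β ≤ δ * 1 := mul_le_mul_of_nonneg_left hβ1.le hδ.le
  have hsum0 : (0:ℝ) ≤ D * (1 - α ^ u) + C * (1 - α ^ s) := add_nonneg hDu0 hCs0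
  constructor
  · exact le_trans (by linarith : -δ / 2 ≤ (0:ℝ)) hsum0
  · calc D * (1 - α ^ u) + C * (1 - α ^ s) ≤ δ / 2 + δ * β := add_le_add hDu hCs
      _ ≤ 3 * δ / 2 := by linarith
end
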